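/- arXiv:2207.08721 — 6 statements merged into one kernel-verified Lean document; each statement's English description precedes it below -/
import Mathlib

section
/- The constant 4 in the inequality ω(XY) ≤ 4 ω(X) ω(Y) is attained: for X = [[0,2],[0,0]] and Y = [[0,0],[2,0]] in M_2(ℂ), one has ω(X) = ω(Y) = 1 and ω(XY) = 4. -/
open Matrix Complex
open scoped ComplexOrder

/-- Hermitian real part `(X + Xᴴ)/2`. -/
noncomputable def reM {m : ℕ} (X : Matrix (Fin m) (Fin m) ℂ) : Matrix (Fin m) (Fin m) ℂ :=
  (1 / 2 : ℂ) • (X + Xᴴ)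

/-- Hermitian imaginary part `(X - Xᴴ)/(2i)`. -/
noncomputable def imM {m : ℕ} (X : Matrix (Fin m) (Fin m) ℂ) : Matrix (Fin m) (Fin m) ℂ :=
  (-Complex.I / 2) • (X - Xᴴ)

/-- Numerical range `W(X) = {⟨Xx, x⟩ : ‖x‖ = 1}`. -/
noncomputable def numRange {m : ℕ} (X : Matrix (Fin m) (Fin m) ℂ) : Set ℂ :=
  {z | ∃ x : EuclideanSpace ℂ (Fin m), ‖x‖ = 1 ∧ z = star (x : Fin m → ℂ) ⬝ᵥ X.mulVec x}

/-- Numerical radius `ω(X) = sup {|z| : z ∈ W(X)}`. -/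
noncomputable def numRadius {m : ℕ} (X : Matrix (Fin m) (Fin m) ℂ) : ℝ :=
  sSup ((fun z : ℂ => ‖z‖) '' numRange X)

/-- The sector `S_α`. -/
def sector (α : ℝ) : Set ℂ := {z : ℂ | 0 < z.re ∧ |z.im| ≤ Real.tan α * z.re}

/-- Operator norm of a matrix acting on Euclidean space. -/
noncomputable def opNorm {m : ℕ} (X : Matrix (Fin m) (Fin m) ℂ) : ℝ :=
  ‖Matrix.toEuclideanCLM (𝕜 := ℂ) X‖


lemma norm_sq_sum {x : EuclideanSpace ℂ (Fin 2)} (hx : ‖x‖ = 1) :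
    ‖x 0‖ ^ 2 + ‖x 1‖ ^ 2 = 1 := by
  have h := EuclideanSpace.norm_eq x
  rw [hx] at h
  have hnn : 0 ≤ ∑ i, ‖x i‖ ^ 2 := Finset.sum_nonneg fun i _ => sq_nonneg _
  have h' : ∑ i, ‖x i‖ ^ 2 = 1 := by rw [← Real.sq_sqrt hnn, ← h]; norm_num
  simpa [Fin.sum_univ_two] using h'

noncomputable def vec2 (a b : ℂ) : EuclideanSpace ℂ (Fin 2) := WithLp.toLp 2 ![a, b]

lemma vec2_norm_one (a b : ℂ) (h : ‖a‖ ^ 2 + ‖b‖ ^ 2 = 1) :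
    ‖vec2 a b‖ = 1 := by
  rw [EuclideanSpace.norm_eq]
  simp only [Fin.sum_univ_two]
  rw [show vec2 a b 0 = a from rfl, show vec2 a b 1 = b from rfl,
    h, Real.sqrt_one]

lemma valX (v : EuclideanSpace ℂ (Fin 2)) :
    star (v : Fin 2 → ℂ) ⬝ᵥ (!![0, 2; 0, 0] : Matrix (Fin 2) (Fin 2) ℂ).mulVec v
      = 2 * (starRingEnd ℂ (v 0)) * v 1 := by
  simp [dotProduct, mulVec, Fin.sum_univ_two]; ring

lemma valY (v : EuclideanSpace ℂ (Fin 2)) :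
    star (v : Fin 2 → ℂ) ⬝ᵥ (!![0, 0; 2, 0] : Matrix (Fin 2) (Fin 2) ℂ).mulVec v
      = 2 * (starRingEnd ℂ (v 1)) * v 0 := by
  simp [dotProduct, mulVec, Fin.sum_univ_two]; ring

lemma valZ (v : EuclideanSpace ℂ (Fin 2)) :
    star (v : Fin 2 → ℂ) ⬝ᵥ (!![4, 0; 0, 0] : Matrix (Fin 2) (Fin 2) ℂ).mulVec v
      = 4 * ((starRingEnd ℂ (v 0)) * v 0) := by
  simp [dotProduct, mulVec, Fin.sum_univ_two]; ring

theorem numRadius_four_sharp :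
    numRadius (!![0, 2; 0, 0] : Matrix (Fin 2) (Fin 2) ℂ) = 1 ∧
    numRadius (!![0, 0; 2, 0] : Matrix (Fin 2) (Fin 2) ℂ) = 1 ∧
    numRadius ((!![0, 2; 0, 0] : Matrix (Fin 2) (Fin 2) ℂ) * !![0, 0; 2, 0]) = 4 := by
  have hs2 : Real.sqrt 2 * Real.sqrt 2 = 2 := Real.mul_self_sqrt (by norm_num)
  have hr : ((Real.sqrt 2)⁻¹ * (Real.sqrt 2)⁻¹ : ℝ) = 1 / 2 := by
    rw [← mul_inv, hs2]; norm_num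
  set a : ℂ := (((Real.sqrt 2)⁻¹ : ℝ) : ℂ) with ha
  have hca : starRingEnd ℂ a = a := Complex.conj_ofReal _
  have haa : a * a = 1 / 2 := by
    rw [ha, ← Complex.ofReal_mul, hr]; norm_num
  have habs : ‖a‖ ^ 2 + ‖a‖ ^ 2 = 1 := by
    rw [ha, Complex.norm_real, Real.norm_eq_abs, _root_.abs_of_nonneg (by positivity), sq, hr]; norm_num
  have hva : ‖vec2 a a‖ = 1 := vec2_norm_one a a habs
  refine ⟨?_, ?_, ?_⟩
  · apply IsGreatest.csSup_eq
    constructor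
    · refine ⟨(1 : ℂ), ⟨vec2 a a, hva, ?_⟩, norm_one⟩
      rw [valX]
      show (1 : ℂ) = 2 * starRingEnd ℂ a * a
      rw [hca, mul_assoc, haa]; norm_num
    · rintro r ⟨z, ⟨x, hx, rfl⟩, rfl⟩
      rw [valX]
      have := norm_sq_sum hx
      beta_reduce
      rw [norm_mul, norm_mul, Complex.norm_two, Complex.norm_conj]
      nlinarith [sq_nonneg (‖x 0‖ - ‖x 1‖),
        norm_nonneg (x 0), norm_nonneg (x 1)]
  · apply IsGreatest.csSup_eq
    constructor
    · refine ⟨(1 : ℂ), ⟨vec2 a a, hva, ?_⟩, norm_one⟩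
      rw [valY]
      show (1 : ℂ) = 2 * starRingEnd ℂ a * a
      rw [hca, mul_assoc, haa]; norm_num
    · rintro r ⟨z, ⟨x, hx, rfl⟩, rfl⟩
      rw [valY]
      have := norm_sq_sum hx
      beta_reduce
      rw [norm_mul, norm_mul, Complex.norm_two, Complex.norm_conj]
      nlinarith [sq_nonneg (‖x 0‖ - ‖x 1‖),
        norm_nonneg (x 0), norm_nonneg (x 1)]
  · have hprod : (!![0, 2; 0, 0] * !![0, 0; 2, 0] : Matrix (Fin 2) (Fin 2) ℂ) = !![4,0;0,0] := by
      ext i j; fin_cases i <;> fin_cases j <;> simp [Matrix.mul_apply, Fin.sum_univ_two] <;> norm_num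
    rw [hprod]
    apply IsGreatest.csSup_eq
    constructor
    · refine ⟨(4 : ℂ), ⟨vec2 1 0, vec2_norm_one 1 0 (by simp), ?_⟩, ?_⟩
      · rw [valZ]
        show (4 : ℂ) = 4 * ((starRingEnd ℂ) 1 * 1)
        simp
      · simp
    · rintro r ⟨z, ⟨x, hx, rfl⟩, rfl⟩
      rw [valZ]
      have := norm_sq_sum hx
      beta_reduce
      rw [norm_mul, norm_mul, Complex.norm_conj, ← sq]
      have h4 : ‖(4 : ℂ)‖ = 4 := by simp
      rw [h4]
      nlinarith [sq_nonneg (‖x 1‖)]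
end

section
/- For X = Y = [[0,2],[0,0]] in M_2(ℂ), ω(X) = 1 and ω(X ∘ X) = 2, where ∘ is the Hadamard (entrywise) product; hence the constant 2 in ω(X ∘ Y) ≤ 2 ω(X) ω(Y) is best possible. -/
open Matrix Complex
open scoped ComplexOrder

private lemma key (c : ℝ) (hc : 0 ≤ c) :
    numRadius (!![0, (c:ℂ); 0, 0] : Matrix (Fin 2) (Fin 2) ℂ) = c / 2 := by
  set X : Matrix (Fin 2) (Fin 2) ℂ := !![0, (c:ℂ); 0, 0]
  have hval : ∀ x : EuclideanSpace ℂ (Fin 2),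
      star (x : Fin 2 → ℂ) ⬝ᵥ X.mulVec x = (starRingEnd ℂ) (x 0) * ((c:ℂ) * x 1) := by
    intro x
    simp [X, Matrix.mulVec, dotProduct, Fin.sum_univ_two, Matrix.cons_val_zero,
      Matrix.cons_val_one]
  have hnorm : ∀ x : EuclideanSpace ℂ (Fin 2), ‖x‖ = 1 →
      ‖x 0‖ ^ 2 + ‖x 1‖ ^ 2 = 1 := by
    intro x hx
    have := EuclideanSpace.norm_eq x
    rw [hx] at this
    have h2 : (1:ℝ) = Real.sqrt (∑ i, ‖x i‖ ^ 2) := this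
    have h3 : ∑ i, ‖x i‖ ^ 2 = 1 := by
      have hnn : 0 ≤ ∑ i, ‖x i‖ ^ 2 := Finset.sum_nonneg fun i _ => sq_nonneg _
      nlinarith [Real.sq_sqrt hnn]
    simpa [Fin.sum_univ_two] using h3
  -- upper bound
  have hub : ∀ z ∈ (fun z : ℂ => ‖z‖) '' numRange X, z ≤ c / 2 := by
    rintro z ⟨w, ⟨x, hx, rfl⟩, rfl⟩
    rw [hval]
    have h1 := hnorm x hx
    have := norm_nonneg (x 0)
    have := norm_nonneg (x 1)
    simp only [norm_mul, Complex.norm_conj, Complex.norm_real, Real.norm_eq_abs, _root_.abs_of_nonneg hc]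
    nlinarith [sq_nonneg (‖x 0‖ - ‖x 1‖)]
  -- witness
  set a : ℝ := (Real.sqrt 2)⁻¹
  have ha2 : a ^ 2 = 1 / 2 := by
    show ((Real.sqrt 2)⁻¹) ^ 2 = 1 / 2
    rw [inv_pow, Real.sq_sqrt (by norm_num : (0:ℝ) ≤ 2)]
    norm_num
  set x : EuclideanSpace ℂ (Fin 2) := WithLp.toLp 2 ![(a:ℂ), (a:ℂ)]
  have ha : (0:ℝ) ≤ a := by positivity
  have hxnorm : ‖x‖ = 1 := by
    rw [EuclideanSpace.norm_eq]
    have : ∑ i, ‖x i‖ ^ 2 = 1 := by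
      simp only [Fin.sum_univ_two]
      have hx0 : ‖x 0‖ = a := by
        show ‖(a:ℂ)‖ = a
        rw [Complex.norm_real, Real.norm_eq_abs, _root_.abs_of_nonneg ha]
      have hx1 : ‖x 1‖ = a := by
        show ‖(a:ℂ)‖ = a
        rw [Complex.norm_real, Real.norm_eq_abs, _root_.abs_of_nonneg ha]
      rw [hx0, hx1]; nlinarith
    rw [this, Real.sqrt_one]
  have hmem : c / 2 ∈ (fun z : ℂ => ‖z‖) '' numRange X := by
    refine ⟨star (x : Fin 2 → ℂ) ⬝ᵥ X.mulVec x, ⟨x, hxnorm, rfl⟩, ?_⟩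
    rw [hval]
    have hx0 : x 0 = (a:ℂ) := rfl
    have hx1 : x 1 = (a:ℂ) := rfl
    rw [hx0, hx1]
    simp only [norm_mul, Complex.norm_conj, Complex.norm_real, Real.norm_eq_abs, _root_.abs_of_nonneg hc, _root_.abs_of_nonneg ha]
    nlinarith
  exact le_antisymm (csSup_le ⟨c/2, hmem⟩ hub)
    (le_csSup ⟨c/2, fun z hz => hub z hz⟩ hmem)

theorem numRadius_hadamard_two_sharp :
    numRadius (!![0, 2; 0, 0] : Matrix (Fin 2) (Fin 2) ℂ) = 1 ∧
    numRadius ((!![0, 2; 0, 0] : Matrix (Fin 2) (Fin 2) ℂ) ⊙ !![0, 2; 0, 0]) = 2 := by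
  constructor
  · have h := key 2 (by norm_num)
    have he : (!![0, ((2:ℝ):ℂ); 0, 0]) = (!![0, 2; 0, 0] : Matrix (Fin 2) (Fin 2) ℂ) := by
      norm_num
    rw [he] at h
    rw [h]; norm_num
  · have h := key 4 (by norm_num)
    have he : (!![0, ((4:ℝ):ℂ); 0, 0])
        = (!![0, 2; 0, 0] : Matrix (Fin 2) (Fin 2) ℂ) ⊙ !![0, 2; 0, 0] := by
      ext i j
      fin_cases i <;> fin_cases j <;> simp [Matrix.hadamard] <;> norm_num
    rw [he] at h
    rw [h]; norm_num
end

section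
/- Let X ∈ M_n(ℂ) with W(X) ⊂ S_α for some α ∈ [0, π/2). Then ‖X‖ ≤ sec(α) ‖Re(X)‖, where ‖·‖ is the operator norm. -/
open Matrix Complex
open scoped ComplexOrder

open scoped Matrix.Norms.L2Operator MatrixOrder

section aux
variable {E : Type*} [NormedAddCommGroup E] [InnerProductSpace ℂ E]
local notation "⟪" x ", " y "⟫" => @inner ℂ _ _ x y

lemma selfadj_norm_le_of_quad {t : E →L[ℂ] E}
    (hsymm : ∀ a b : E, ⟪t a, b⟫ = ⟪a, t b⟫) {c : ℝ} (hc : 0 ≤ c)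
    (hq : ∀ x : E, ‖⟪x, t x⟫‖ ≤ c * ‖x‖ ^ 2) : ‖t‖ ≤ c := by
  refine ContinuousLinearMap.opNorm_le_bound t hc (fun x => ?_)
  rcases eq_or_ne (t x) 0 with h0 | h0
  · simp [h0, mul_nonneg hc (norm_nonneg x)]
  rcases eq_or_ne x 0 with rfl | hx0
  · simp at h0
  have htx : (0:ℝ) < ‖t x‖ := norm_pos_iff.mpr h0
  have hx : (0:ℝ) < ‖x‖ := norm_pos_iff.mpr hx0
  set y : E := (‖x‖ / ‖t x‖) • t x with hy
  have hny : ‖y‖ = ‖x‖ := by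
    rw [hy, norm_smul, Real.norm_eq_abs,
      _root_.abs_of_nonneg (div_nonneg (norm_nonneg x) (norm_nonneg (t x))),
      div_mul_cancel₀ _ htx.ne']
  have h1 : ⟪x, t y⟫ = starRingEnd ℂ ⟪y, t x⟫ := by
    rw [← hsymm x y, ← inner_conj_symm]
  have h3 : (⟪x, t y⟫ : ℂ).re = (⟪y, t x⟫ : ℂ).re := by rw [h1, Complex.conj_re]
  have expand : ⟪x + y, t (x + y)⟫ - ⟪x - y, t (x - y)⟫
      = 2 * (⟪x, t y⟫ + ⟪y, t x⟫) := by
    simp only [map_add, map_sub, inner_add_left, inner_add_right, inner_sub_left,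
      inner_sub_right]
    ring
  have key : 4 * re ⟪y, t x⟫ = re ⟪x + y, t (x + y)⟫ - re ⟪x - y, t (x - y)⟫ := by
    rw [← Complex.sub_re, expand]
    have h2re : ((2:ℂ) * (⟪x, t y⟫ + ⟪y, t x⟫)).re
        = 2 * ((⟪x, t y⟫ : ℂ).re + (⟪y, t x⟫ : ℂ).re) := by
      simp [Complex.mul_re]
    rw [h2re, h3]; ring
  have hb : ∀ v : E, |re ⟪v, t v⟫| ≤ c * ‖v‖ ^ 2 := fun v =>
    (Complex.abs_re_le_norm _).trans (hq v)
  have hpar : ‖x + y‖ ^ 2 + ‖x - y‖ ^ 2 = 2 * (‖x‖ ^ 2 + ‖y‖ ^ 2) := by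
    have := parallelogram_law_with_norm ℂ x y
    nlinarith [this]
  have h4 : 4 * re ⟪y, t x⟫ ≤ c * ‖x + y‖ ^ 2 + c * ‖x - y‖ ^ 2 := by
    rw [key]
    cases' abs_le.mp (hb (x+y)) with _ h1'
    cases' abs_le.mp (hb (x-y)) with h2' _
    linarith
  have hval : re ⟪y, t x⟫ = ‖x‖ * ‖t x‖ := by
    have hyc : y = ((((‖x‖ / ‖t x‖) : ℝ)) : ℂ) • t x := by
      rw [hy, RCLike.real_smul_eq_coe_smul (K := ℂ)]; norm_cast
    rw [hyc, inner_smul_left, inner_self_eq_norm_sq_to_K (𝕜 := ℂ), Complex.conj_ofReal]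
    norm_cast
    field_simp
    simp only [Complex.re_ofReal_mul, Complex.ofReal_re, RCLike.re_ofReal_mul, RCLike.ofReal_re]
    rw [div_mul_eq_mul_div, div_eq_iff htx.ne']
    exact (congrArg (‖x‖ * ·) (Complex.ofReal_re _)).trans (by simp only [Algebra.algebraMap_self, RingHom.id_apply]; ring)
  have hny2 : ‖y‖ ^ 2 = ‖x‖ ^ 2 := by rw [hny]
  have hmain : ‖x‖ * ‖t x‖ ≤ c * ‖x‖ ^ 2 := by
    have hc4 : 4 * (‖x‖ * ‖t x‖) ≤ 4 * (c * ‖x‖ ^ 2) := by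
      calc 4 * (‖x‖ * ‖t x‖) = 4 * re ⟪y, t x⟫ := by rw [hval]
        _ ≤ c * ‖x + y‖ ^ 2 + c * ‖x - y‖ ^ 2 := h4
        _ = c * (‖x + y‖ ^ 2 + ‖x - y‖ ^ 2) := by ring
        _ = c * (2 * (‖x‖ ^ 2 + ‖y‖ ^ 2)) := by rw [hpar]
        _ = 4 * (c * ‖x‖ ^ 2) := by rw [hny2]; ring
    linarith
  have : ‖x‖ * ‖t x‖ ≤ ‖x‖ * (c * ‖x‖) := by nlinarith [hmain]
  exact le_of_mul_le_mul_left this hx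

end aux

local notation "⟪" x ", " y "⟫_ℂ" => @inner ℂ _ _ x y

theorem opNorm_le_sec_mul_opNorm_reM {n : ℕ} (X : Matrix (Fin n) (Fin n) ℂ) (α : ℝ)
    (hα : α ∈ Set.Ico 0 (Real.pi / 2)) (h : numRange X ⊆ sector α) :
    opNorm X ≤ (Real.cos α)⁻¹ * opNorm (reM X) := by
  obtain ⟨hα0, hαlt⟩ := hα
  have hπ : (0:ℝ) < Real.pi / 2 := by positivity
  have hcos : 0 < Real.cos α := Real.cos_pos_of_mem_Ioo ⟨by linarith, hαlt⟩
  have htan : 0 ≤ Real.tan α := by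
    rw [Real.tan_eq_sin_div_cos]
    exact div_nonneg (Real.sin_nonneg_of_nonneg_of_le_pi hα0 (by linarith [Real.pi_pos])) hcos.le
  set A := reM X with hA
  set B := imM X with hB
  have hAH : A.IsHermitian := by
    unfold A
    unfold reM Matrix.IsHermitian
    rw [conjTranspose_smul, conjTranspose_add, conjTranspose_conjTranspose]
    simp [add_comm]
  have hBH : B.IsHermitian := by
    unfold B
    unfold imM Matrix.IsHermitian
    rw [conjTranspose_smul, conjTranspose_sub, conjTranspose_conjTranspose]
    rw [show star (-Complex.I / 2) = Complex.I / 2 by simp]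
    rw [show (Xᴴ - X) = -(X - Xᴴ) from (neg_sub _ _).symm]
    rw [smul_neg, ← neg_smul]
    ring_nf
  have hXAB : X = A + Complex.I • B := by
    unfold A B
    unfold reM imM
    rw [smul_smul]
    rw [show Complex.I * (-Complex.I / 2) = 1/2 by
      linear_combination (-1/2 : ℂ) * Complex.I_sq]
    module
  -- quadratic forms
  have hconj : ∀ x : Fin n → ℂ,
      star x ⬝ᵥ Xᴴ *ᵥ x = star (star x ⬝ᵥ X *ᵥ x) := by
    intro x
    rw [dotProduct_mulVec, ← star_mulVec, star_dotProduct]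
  have hformA : ∀ x : Fin n → ℂ,
      star x ⬝ᵥ A *ᵥ x = (((star x ⬝ᵥ X *ᵥ x).re : ℝ) : ℂ) := by
    intro x
    unfold A
    unfold reM
    rw [smul_mulVec, add_mulVec, dotProduct_smul, dotProduct_add, hconj]
    set w := star x ⬝ᵥ X *ᵥ x
    simp only [smul_eq_mul]
    rw [show star w = (starRingEnd ℂ) w from rfl, Complex.add_conj]
    push_cast
    ring
  have hformB : ∀ x : Fin n → ℂ,
      star x ⬝ᵥ B *ᵥ x = (((star x ⬝ᵥ X *ᵥ x).im : ℝ) : ℂ) := by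
    intro x
    unfold B
    unfold imM
    rw [smul_mulVec, sub_mulVec, dotProduct_smul, dotProduct_sub, hconj]
    set w := star x ⬝ᵥ X *ᵥ x
    simp only [smul_eq_mul]
    rw [show star w = (starRingEnd ℂ) w from rfl, Complex.sub_conj]
    push_cast
    linear_combination (-(w.im : ℂ)) * Complex.I_sq
  -- sector condition for all nonzero vectors
  have hsec : ∀ x : Fin n → ℂ, x ≠ 0 →
      0 < (star x ⬝ᵥ X *ᵥ x).re ∧
        |(star x ⬝ᵥ X *ᵥ x).im| ≤ Real.tan α * (star x ⬝ᵥ X *ᵥ x).re := by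
    intro x hx
    set w := star x ⬝ᵥ X *ᵥ x with hw
    set xE : EuclideanSpace ℂ (Fin n) := (WithLp.equiv 2 (Fin n → ℂ)).symm x with hxE
    have hxE0 : xE ≠ 0 := by
      intro h0
      exact hx (by rw [← (WithLp.equiv 2 (Fin n → ℂ)).apply_symm_apply x, ← hxE, h0]; rfl)
    have hnx : (0:ℝ) < ‖xE‖ := norm_pos_iff.mpr hxE0
    set r : ℝ := ‖xE‖⁻¹ with hr
    have hrpos : (0:ℝ) < r := by positivity
    set u : EuclideanSpace ℂ (Fin n) := ((r : ℂ)) • xE with hu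
    have hun : ‖u‖ = 1 := by
      rw [hu, norm_smul]
      simp only [Complex.norm_real, Real.norm_eq_abs, hr, abs_of_pos (by positivity : (0:ℝ) < ‖xE‖⁻¹)]
      field_simp
    have hufun : (u : Fin n → ℂ) = (r : ℂ) • x := rfl
    have hmem : (star (u : Fin n → ℂ) ⬝ᵥ X *ᵥ (u : Fin n → ℂ)) ∈ numRange X :=
      ⟨u, hun, rfl⟩
    have hcomp : star (u : Fin n → ℂ) ⬝ᵥ X *ᵥ (u : Fin n → ℂ) = ((r^2 : ℝ) : ℂ) * w := by
      rw [hufun, star_smul, Matrix.mulVec_smul, smul_dotProduct, dotProduct_smul, hw]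
      simp only [smul_eq_mul, star_trivial]
      rw [show star ((r:ℂ)) = (r:ℂ) from by simp]
      push_cast
      ring
    have hzsec := h hmem
    rw [hcomp] at hzsec
    obtain ⟨h1, h2⟩ := hzsec
    have hre : (((r^2 : ℝ) : ℂ) * w).re = r^2 * w.re := by
      simp [Complex.mul_re, ← Complex.ofReal_pow]
    have him : (((r^2 : ℝ) : ℂ) * w).im = r^2 * w.im := by
      simp [Complex.mul_im, ← Complex.ofReal_pow]
    rw [hre] at h1
    rw [him, hre] at h2
    have hr2 : (0:ℝ) < r^2 := by positivity
    constructor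
    · nlinarith [h1]
    · rw [abs_mul, abs_of_pos hr2] at h2
      have := (mul_le_mul_iff_right₀ hr2).mp (by linarith [h2] : r^2 * |w.im| ≤ r^2 * (Real.tan α * w.re))
      exact this
  -- A is positive definite
  have hApd : A.PosDef := by
    refine Matrix.PosDef.of_dotProduct_mulVec_pos hAH (fun x hx => ?_)
    rw [hformA x]
    exact_mod_cast Complex.zero_lt_real.mpr (hsec x hx).1
  have hApsd : A.PosSemidef := hApd.posSemidef
  set S := CFC.sqrt A with hS
  have hSps : S.PosSemidef := (CFC.sqrt_nonneg A).posSemidef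
  have hSH : S.IsHermitian := hSps.1
  have hSS : S * S = A := CFC.sqrt_mul_sqrt_self A hApsd.nonneg
  have hSdet : IsUnit S.det := by
    have h1 : IsUnit (S.det * S.det) := by
      rw [← Matrix.det_mul, hSS]
      exact (Matrix.isUnit_iff_isUnit_det A).mp hApd.isUnit
    exact isUnit_of_mul_isUnit_left h1
  set C := S⁻¹ with hC
  have hSC : S * C = 1 := Matrix.mul_nonsing_inv S hSdet
  have hCS : C * S = 1 := Matrix.nonsing_inv_mul S hSdet
  have hCH : C.IsHermitian := by
    rw [hC, Matrix.IsHermitian, Matrix.conjTranspose_nonsing_inv, hSH.eq]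
  set T := C * B * C with hT
  have hTH : T.IsHermitian := by
    rw [hT, Matrix.IsHermitian, Matrix.conjTranspose_mul, Matrix.conjTranspose_mul,
      hCH.eq, hBH.eq, Matrix.mul_assoc]
  have hSTS : S * T * S = B := by
    rw [hT]
    have e1 : S * (C * B * C) * S = S * C * B * (C * S) := by
      simp only [Matrix.mul_assoc]
    rw [e1, hSC, hCS, Matrix.one_mul, Matrix.mul_one]
  have hfact : X = S * (1 + Complex.I • T) * S := by
    have e2 : S * (1 + Complex.I • T) * S = S * S + Complex.I • (S * T * S) := by
      rw [Matrix.mul_add, Matrix.mul_one, Matrix.add_mul, mul_smul_comm, smul_mul_assoc]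
    rw [e2, hSS, hSTS, ← hXAB]
  -- now to the CLM side
  set t := Matrix.toEuclideanCLM (𝕜 := ℂ) T with ht
  have htsa : _root_.IsSelfAdjoint t := by
    have h8 : star T = T := hTH
    have h9 : star t = t := by rw [ht, ← map_star, h8]
    exact h9
  have hsym : ∀ a b : EuclideanSpace ℂ (Fin n), ⟪t a, b⟫_ℂ = ⟪a, t b⟫_ℂ :=
    fun a b => (ContinuousLinearMap.isSelfAdjoint_iff_isSymmetric.mp htsa) a b
  have hq : ∀ y : EuclideanSpace ℂ (Fin n), ‖⟪y, t y⟫_ℂ‖ ≤ Real.tan α * ‖y‖ ^ 2 := by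
    intro y
    rcases eq_or_ne y 0 with rfl | hy0
    · simp
    obtain ⟨yf, hyf⟩ : ∃ yf : Fin n → ℂ, yf = (WithLp.equiv 2 (Fin n → ℂ)) y := ⟨_, rfl⟩
    obtain ⟨z, hz⟩ : ∃ z : Fin n → ℂ, z = C *ᵥ yf := ⟨_, rfl⟩
    have hSz : S *ᵥ z = yf := by rw [hz, Matrix.mulVec_mulVec, hSC, Matrix.one_mulVec]
    have hinner_y : ⟪y, t y⟫_ℂ = star yf ⬝ᵥ T *ᵥ yf := by
      rw [hyf, EuclideanSpace.inner_eq_star_dotProduct, dotProduct_comm]; rfl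
    have hnorm_y : star yf ⬝ᵥ yf = ((‖y‖ : ℂ)) ^ 2 := by
      rw [hyf, dotProduct_comm]; change WithLp.ofLp y ⬝ᵥ star (WithLp.ofLp y) = _
      rw [← EuclideanSpace.inner_eq_star_dotProduct]
      exact inner_self_eq_norm_sq_to_K y
    have hyf0 : yf ≠ 0 := by
      rw [hyf]
      intro h0
      exact hy0 ((WithLp.equiv 2 (Fin n → ℂ)).injective (by simpa using h0))
    have hz0 : z ≠ 0 := fun h0 => hyf0 (by rw [← hSz, h0, Matrix.mulVec_zero])
    have hstarz : star z = star yf ᵥ* C := by rw [hz, Matrix.star_mulVec, hCH.eq]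
    have key1 : star yf ⬝ᵥ T *ᵥ yf = star z ⬝ᵥ B *ᵥ z := by
      rw [hT, ← Matrix.mulVec_mulVec, ← Matrix.mulVec_mulVec,
        Matrix.dotProduct_mulVec (star yf) C, ← hstarz, ← hz]
    have hstary : star z ᵥ* S = star yf := by rw [← hSz, Matrix.star_mulVec, hSH.eq]
    have key2 : star z ⬝ᵥ A *ᵥ z = star yf ⬝ᵥ yf := by
      have e3 : A *ᵥ z = S *ᵥ (S *ᵥ z) := by rw [Matrix.mulVec_mulVec, hSS]
      rw [e3, Matrix.dotProduct_mulVec (star z) S, hstary, hSz]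
    have hre : (star z ⬝ᵥ X *ᵥ z).re = ‖y‖ ^ 2 := by
      have h7 : (((star z ⬝ᵥ X *ᵥ z).re : ℝ) : ℂ) = ((‖y‖ : ℂ)) ^ 2 := by
        rw [← hformA z, key2, hnorm_y]
      rw [← Complex.ofReal_pow] at h7
      exact_mod_cast h7
    have him : ⟪y, t y⟫_ℂ = (((star z ⬝ᵥ X *ᵥ z).im : ℝ) : ℂ) := by
      rw [hinner_y, key1, hformB z]
    rw [him, Complex.norm_real, Real.norm_eq_abs]
    calc |(star z ⬝ᵥ X *ᵥ z).im| ≤ Real.tan α * (star z ⬝ᵥ X *ᵥ z).re := (hsec z hz0).2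
      _ = Real.tan α * ‖y‖ ^ 2 := by rw [hre]
  have ht_norm : ‖t‖ ≤ Real.tan α := selfadj_norm_le_of_quad hsym htan hq
  -- norm of 1 + I • t
  have hmid : ‖(1 : EuclideanSpace ℂ (Fin n) →L[ℂ] EuclideanSpace ℂ (Fin n))
      + Complex.I • t‖ ≤ (Real.cos α)⁻¹ := by
    refine ContinuousLinearMap.opNorm_le_bound _ (by positivity) fun y => ?_
    have happ : (1 + Complex.I • t) y = y + Complex.I • t y := rfl
    have hreal : (⟪y, t y⟫_ℂ).im = 0 := by
      have h5 : (starRingEnd ℂ) ⟪y, t y⟫_ℂ = ⟪y, t y⟫_ℂ := by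
        rw [inner_conj_symm]
        exact hsym y y
      exact Complex.conj_eq_iff_im.mp h5
    have hexp : ‖y + Complex.I • t y‖ ^ 2 = ‖y‖ ^ 2 + ‖t y‖ ^ 2 := by
      rw [norm_add_sq (𝕜 := ℂ), inner_smul_right, norm_smul]
      have h10 : RCLike.re (Complex.I * ⟪y, t y⟫_ℂ) = 0 := by
        show (Complex.I * ⟪y, t y⟫_ℂ).re = 0
        rw [Complex.mul_re, Complex.I_re, Complex.I_im, hreal]
        ring
      rw [h10]
      have h11 : ‖Complex.I‖ = 1 := by simp
      rw [h11]
      ring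
    have hb : ‖t y‖ ≤ Real.tan α * ‖y‖ :=
      (t.le_opNorm y).trans (mul_le_mul_of_nonneg_right ht_norm (norm_nonneg y))
    have hsec2 : 1 + Real.tan α ^ 2 = ((Real.cos α)⁻¹) ^ 2 := by
      have hs := Real.sin_sq_add_cos_sq α
      rw [Real.tan_eq_sin_div_cos, div_pow, inv_pow]
      have hc2 : Real.cos α ^ 2 ≠ 0 := by positivity
      field_simp
      linarith
    have h2 : ‖(1 + Complex.I • t) y‖ ^ 2 ≤ ((Real.cos α)⁻¹ * ‖y‖) ^ 2 := by
      rw [happ, hexp]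
      calc ‖y‖ ^ 2 + ‖t y‖ ^ 2 ≤ ‖y‖ ^ 2 + (Real.tan α * ‖y‖) ^ 2 := by
            have h12 := pow_le_pow_left₀ (norm_nonneg (t y)) hb 2
            linarith
        _ = (1 + Real.tan α ^ 2) * ‖y‖ ^ 2 := by ring
        _ = ((Real.cos α)⁻¹) ^ 2 * ‖y‖ ^ 2 := by rw [hsec2]
        _ = ((Real.cos α)⁻¹ * ‖y‖) ^ 2 := by ring
    have h3 := Real.sqrt_le_sqrt h2
    rw [Real.sqrt_sq (norm_nonneg _), Real.sqrt_sq (by positivity)] at h3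
    exact h3
  have hone : Matrix.toEuclideanCLM (𝕜 := ℂ) ((1 : Matrix (Fin n) (Fin n) ℂ) + Complex.I • T)
      = 1 + Complex.I • t := by
    rw [map_add, _root_.map_one, _root_.map_smul, ht]
  have hmidM : ‖(1 : Matrix (Fin n) (Fin n) ℂ) + Complex.I • T‖ ≤ (Real.cos α)⁻¹ := by
    rw [Matrix.cstar_norm_def, hone]
    exact hmid
  have hXle : ‖X‖ ≤ ‖S‖ * ‖(1 : Matrix (Fin n) (Fin n) ℂ) + Complex.I • T‖ * ‖S‖ := by
    conv_lhs => rw [hfact]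
    calc ‖S * (1 + Complex.I • T) * S‖ ≤ ‖S * (1 + Complex.I • T)‖ * ‖S‖ := norm_mul_le _ _
      _ ≤ ‖S‖ * ‖(1 : Matrix (Fin n) (Fin n) ℂ) + Complex.I • T‖ * ‖S‖ :=
        mul_le_mul_of_nonneg_right (norm_mul_le _ _) (norm_nonneg _)
  have hSnorm : ‖S‖ * ‖S‖ = ‖A‖ := by
    conv_rhs => rw [← hSS, show S * S = star S * S from by
      rw [Matrix.star_eq_conjTranspose, hSH.eq]]
    rw [CStarRing.norm_star_mul_self]
  have hfinal : ‖X‖ ≤ (Real.cos α)⁻¹ * ‖A‖ := by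
    calc ‖X‖ ≤ ‖S‖ * ‖(1 : Matrix (Fin n) (Fin n) ℂ) + Complex.I • T‖ * ‖S‖ := hXle
      _ = ‖(1 : Matrix (Fin n) (Fin n) ℂ) + Complex.I • T‖ * (‖S‖ * ‖S‖) := by ring
      _ = ‖(1 : Matrix (Fin n) (Fin n) ℂ) + Complex.I • T‖ * ‖A‖ := by rw [hSnorm]
      _ ≤ (Real.cos α)⁻¹ * ‖A‖ := mul_le_mul_of_nonneg_right hmidM (norm_nonneg _)
  exact hfinal
end

section
/- Let X, Y ∈ M_n(ℂ) and suppose there exist unit-modulus complex numbers z, w such that W(zX) ⊂ S_{α₁} and W(wY) ⊂ S_{α₂} with α₁, α₂ ∈ [0, π/2). Then ω(XY) ≤ sec(α₁) sec(α₂) ω(X) ω(Y). -/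
open Matrix Complex
open scoped ComplexOrder

set_option maxHeartbeats 2000000
set_option synthInstance.maxHeartbeats 400000

section Aux

variable {n : ℕ}

lemma reOfRealMul (r : ℝ) (z : ℂ) : ((r:ℂ) * z).re = r * z.re := by
  simp [Complex.mul_re]

lemma imOfRealMul (r : ℝ) (z : ℂ) : ((r:ℂ) * z).im = r * z.im := by
  simp [Complex.mul_im]

lemma dot_conjT (A : Matrix (Fin n) (Fin n) ℂ) (x : Fin n → ℂ) :
    star x ⬝ᵥ Aᴴ *ᵥ x = starRingEnd ℂ (star x ⬝ᵥ A *ᵥ x) := by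
  simp only [dotProduct, mulVec, conjTranspose_apply, Pi.star_apply, map_sum, _root_.map_mul,
    Finset.mul_sum, RingHomCompTriple.comp_apply, Complex.conj_conj, RingHom.id_apply]
  rw [Finset.sum_comm]
  refine Finset.sum_congr rfl fun i _ => Finset.sum_congr rfl fun j _ => ?_
  simp only [_root_.map_mul, Complex.star_def, Complex.conj_conj]
  ring

lemma reM_isHermitian (A : Matrix (Fin n) (Fin n) ℂ) : (reM A).IsHermitian := by
  have : star ((1:ℂ)/2) = (1:ℂ)/2 := by simp
  unfold reM Matrix.IsHermitian
  rw [conjTranspose_smul, conjTranspose_add, conjTranspose_conjTranspose, this, add_comm]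

lemma imM_isHermitian (A : Matrix (Fin n) (Fin n) ℂ) : (imM A).IsHermitian := by
  have h : star (-Complex.I/2) = Complex.I/2 := by simp [Complex.ext_iff]
  unfold imM Matrix.IsHermitian
  rw [conjTranspose_smul, conjTranspose_sub, conjTranspose_conjTranspose, h]
  rw [show Aᴴ - A = -(A - Aᴴ) by abel, smul_neg, ← neg_smul, ← neg_div]

lemma qf_reM (A : Matrix (Fin n) (Fin n) ℂ) (x : Fin n → ℂ) :
    star x ⬝ᵥ (reM A) *ᵥ x = ((star x ⬝ᵥ A *ᵥ x).re : ℂ) := by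
  rw [reM, smul_mulVec, add_mulVec, dotProduct_smul, dotProduct_add, dot_conjT,
    Complex.add_conj]
  simp only [smul_eq_mul]
  push_cast
  ring

lemma qf_imM (A : Matrix (Fin n) (Fin n) ℂ) (x : Fin n → ℂ) :
    star x ⬝ᵥ (imM A) *ᵥ x = ((star x ⬝ᵥ A *ᵥ x).im : ℂ) := by
  rw [imM, smul_mulVec, sub_mulVec, dotProduct_smul, dotProduct_sub, dot_conjT,
    Complex.sub_conj]
  simp only [smul_eq_mul]
  push_cast
  linear_combination (-(((star x ⬝ᵥ A *ᵥ x).im : ℝ) : ℂ)) * Complex.I_sq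

lemma reM_add_I_imM (A : Matrix (Fin n) (Fin n) ℂ) : reM A + Complex.I • imM A = A := by
  unfold reM imM
  rw [smul_smul, show Complex.I * (-Complex.I/2) = 1/2 by
    linear_combination (-(1:ℂ)/2) * Complex.I_sq]
  rw [smul_add, smul_sub]
  module

lemma qf_smul (A : Matrix (Fin n) (Fin n) ℂ) (c : ℂ) (x : Fin n → ℂ) :
    star (c • x) ⬝ᵥ A *ᵥ (c • x) = (starRingEnd ℂ c * c) * (star x ⬝ᵥ A *ᵥ x) := by
  rw [star_smul, mulVec_smul, smul_dotProduct, dotProduct_smul]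
  simp only [smul_eq_mul, star_def]
  ring

lemma norm_dot_le_opNorm (A : Matrix (Fin n) (Fin n) ℂ) (x : EuclideanSpace ℂ (Fin n)) :
    ‖star (x : Fin n → ℂ) ⬝ᵥ A *ᵥ (x : Fin n → ℂ)‖ ≤ opNorm A * ‖x‖ ^ 2 := by
  have h1 : (inner ℂ x (Matrix.toEuclideanCLM (𝕜 := ℂ) A x) : ℂ)
      = star (x : Fin n → ℂ) ⬝ᵥ A *ᵥ (x : Fin n → ℂ) :=
      (EuclideanSpace.inner_eq_star_dotProduct _ _).trans (dotProduct_comm _ _)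
  calc ‖star (x : Fin n → ℂ) ⬝ᵥ A *ᵥ (x : Fin n → ℂ)‖
      = ‖(inner ℂ x (Matrix.toEuclideanCLM (𝕜 := ℂ) A x) : ℂ)‖ := by
        rw [h1]
    _ ≤ ‖x‖ * ‖Matrix.toEuclideanCLM (𝕜 := ℂ) A x‖ := norm_inner_le_norm _ _
    _ ≤ ‖x‖ * (opNorm A * ‖x‖) := by
        exact mul_le_mul_of_nonneg_left ((Matrix.toEuclideanCLM (𝕜 := ℂ) A).le_opNorm x)
          (norm_nonneg x)
    _ = opNorm A * ‖x‖ ^ 2 := by ring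

lemma bddAbove_absNumRange (A : Matrix (Fin n) (Fin n) ℂ) :
    BddAbove ((fun z : ℂ => ‖z‖) '' numRange A) := by
  refine ⟨opNorm A, ?_⟩
  rintro r ⟨q, ⟨x, hx, rfl⟩, rfl⟩
  simpa [hx] using norm_dot_le_opNorm A x

lemma numRadius_nonneg (A : Matrix (Fin n) (Fin n) ℂ) : 0 ≤ numRadius A :=
  Real.sSup_nonneg fun r ⟨q, _, hq⟩ => hq ▸ norm_nonneg q

lemma le_numRadius (A : Matrix (Fin n) (Fin n) ℂ) (x : EuclideanSpace ℂ (Fin n))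
    (hx : ‖x‖ = 1) :
    ‖star (x : Fin n → ℂ) ⬝ᵥ A *ᵥ (x : Fin n → ℂ)‖ ≤ numRadius A :=
  le_csSup (bddAbove_absNumRange A) ⟨_, ⟨x, hx, rfl⟩, rfl⟩

lemma abs_qf_le (A : Matrix (Fin n) (Fin n) ℂ) (x : EuclideanSpace ℂ (Fin n)) :
    ‖star (x : Fin n → ℂ) ⬝ᵥ A *ᵥ (x : Fin n → ℂ)‖ ≤ numRadius A * ‖x‖ ^ 2 := by
  rcases eq_or_ne x 0 with rfl | hx
  · simp [numRadius_nonneg A]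
  · have hxn : (0:ℝ) < ‖x‖ := norm_pos_iff.mpr hx
    set c : ℂ := ((‖x‖⁻¹ : ℝ) : ℂ) with hc
    set u : EuclideanSpace ℂ (Fin n) := c • x with hu
    have hun : ‖u‖ = 1 := by
      rw [hu, norm_smul, hc, Complex.norm_real, Real.norm_eq_abs, abs_of_pos (by positivity)]
      field_simp
    have hq : star (u : Fin n → ℂ) ⬝ᵥ A *ᵥ (u : Fin n → ℂ)
        = ((‖x‖⁻¹ ^ 2 : ℝ) : ℂ) * (star (x : Fin n → ℂ) ⬝ᵥ A *ᵥ (x : Fin n → ℂ)) := by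
      rw [show (u : Fin n → ℂ) = c • (x : Fin n → ℂ) from rfl, qf_smul]
      congr 1
      rw [hc, Complex.conj_ofReal]
      push_cast
      ring
    have := le_numRadius A u hun
    rw [hq, norm_mul] at this
    have habs : ‖((‖x‖⁻¹ ^ 2 : ℝ) : ℂ)‖ = ‖x‖⁻¹ ^ 2 := by
      rw [Complex.norm_real, Real.norm_eq_abs, abs_of_pos (by positivity)]
    rw [habs] at this
    have h2 : ‖star (x : Fin n → ℂ) ⬝ᵥ A *ᵥ (x : Fin n → ℂ)‖
        = ‖x‖ ^ 2 * (‖x‖⁻¹ ^ 2 * ‖star (x : Fin n → ℂ) ⬝ᵥ A *ᵥ (x : Fin n → ℂ)‖) := by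
      field_simp
    rw [h2]
    calc ‖x‖ ^ 2 * (‖x‖⁻¹ ^ 2 * ‖_‖) ≤ ‖x‖ ^ 2 * numRadius A := by
          exact mul_le_mul_of_nonneg_left this (by positivity)
      _ = numRadius A * ‖x‖ ^ 2 := by ring

lemma sector_facts (A : Matrix (Fin n) (Fin n) ℂ) {α : ℝ} (hA : numRange A ⊆ sector α)
    (x : Fin n → ℂ) (hx : x ≠ 0) :
    0 < (star x ⬝ᵥ A *ᵥ x).re ∧
      |(star x ⬝ᵥ A *ᵥ x).im| ≤ Real.tan α * (star x ⬝ᵥ A *ᵥ x).re := by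
  set y : EuclideanSpace ℂ (Fin n) := WithLp.toLp 2 x with hy
  have hy0 : y ≠ 0 := by simpa [hy] using hx
  have hxn : (0:ℝ) < ‖y‖ := norm_pos_iff.mpr hy0
  set c : ℂ := ((‖y‖⁻¹ : ℝ) : ℂ) with hc
  set u : EuclideanSpace ℂ (Fin n) := c • y with hu
  have hun : ‖u‖ = 1 := by
    rw [hu, norm_smul, hc, Complex.norm_real, Real.norm_eq_abs, abs_of_pos (by positivity)]
    field_simp
  have hmem : (star (u : Fin n → ℂ) ⬝ᵥ A *ᵥ (u : Fin n → ℂ)) ∈ sector α :=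
    hA ⟨u, hun, rfl⟩
  have hq : star (u : Fin n → ℂ) ⬝ᵥ A *ᵥ (u : Fin n → ℂ)
      = ((‖y‖⁻¹ ^ 2 : ℝ) : ℂ) * (star x ⬝ᵥ A *ᵥ x) := by
    rw [show (u : Fin n → ℂ) = c • x from rfl, qf_smul]
    congr 1
    rw [hc, Complex.conj_ofReal]
    push_cast
    ring
  rw [hq] at hmem
  obtain ⟨h1, h2⟩ := hmem
  set z := star x ⬝ᵥ A *ᵥ x with hz
  have hr : (0:ℝ) < ‖y‖⁻¹ ^ 2 := by positivity
  have hre : (((‖y‖⁻¹ ^ 2 : ℝ) : ℂ) * z).re = ‖y‖⁻¹ ^ 2 * z.re := reOfRealMul _ _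
  have him : (((‖y‖⁻¹ ^ 2 : ℝ) : ℂ) * z).im = ‖y‖⁻¹ ^ 2 * z.im := imOfRealMul _ _
  rw [hre] at h1 h2
  rw [him] at h2
  constructor
  · nlinarith
  · rw [abs_mul, abs_of_pos hr] at h2
    have := (mul_le_mul_iff_right₀ hr).mp (by linarith [h2] : ‖y‖⁻¹ ^ 2 * |z.im| ≤ ‖y‖⁻¹ ^ 2 * (Real.tan α * z.re))
    exact this

lemma qf_real_of_isHermitian {A : Matrix (Fin n) (Fin n) ℂ} (hA : A.IsHermitian)
    (x : Fin n → ℂ) : (star x ⬝ᵥ A *ᵥ x).im = 0 := by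
  rw [← Complex.conj_eq_iff_im, ← dot_conjT, hA.eq]

/-- Norm bound for selfadjoint operators from the quadratic form. -/
lemma selfadjoint_norm_le (T : EuclideanSpace ℂ (Fin n) →L[ℂ] EuclideanSpace ℂ (Fin n))
    (hT : IsSelfAdjoint T) {c : ℝ} (hc : 0 ≤ c)
    (h : ∀ x : EuclideanSpace ℂ (Fin n), |(inner ℂ x (T x) : ℂ).re| ≤ c * ‖x‖ ^ 2) :
    ‖T‖ ≤ c := by
  refine T.opNorm_le_bound hc fun x => ?_
  rcases eq_or_ne (T x) 0 with h0 | h0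
  · rw [h0, norm_zero]
    positivity
  have hTx : (0:ℝ) < ‖T x‖ := norm_pos_iff.mpr h0
  have hx0 : x ≠ 0 := by rintro rfl; simp at h0
  have hx : (0:ℝ) < ‖x‖ := norm_pos_iff.mpr hx0
  set s : ℝ := ‖x‖ / ‖T x‖ with hs
  have hs0 : 0 < s := by positivity
  set y : EuclideanSpace ℂ (Fin n) := ((s:ℝ):ℂ) • T x with hy
  have hyn : ‖y‖ = ‖x‖ := by
    rw [hy, norm_smul, Complex.norm_real, Real.norm_eq_abs, abs_of_pos hs0, hs]
    field_simp
  have hsymm : ∀ u v : EuclideanSpace ℂ (Fin n), (inner ℂ u (T v) : ℂ) = inner ℂ (T u) v := by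
    intro u v
    rw [← ContinuousLinearMap.adjoint_inner_left, hT.adjoint_eq]
  have hconj : (inner ℂ x (T y) : ℂ) = starRingEnd ℂ (inner ℂ y (T x)) := by
    rw [hsymm x y, ← inner_conj_symm]
  have hz : (inner ℂ y (T x) : ℂ).re = s * ‖T x‖ ^ 2 := by
    rw [hy, inner_smul_left, Complex.conj_ofReal, reOfRealMul]
    congr 1
    have := inner_self_eq_norm_sq (𝕜 := ℂ) (T x)
    simpa using this
  have expand : (inner ℂ (x + y) (T (x + y)) : ℂ).re - (inner ℂ (x - y) (T (x - y)) : ℂ).re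
      = 4 * (s * ‖T x‖ ^ 2) := by
    have e1 : (inner ℂ (x + y) (T (x + y)) : ℂ) - inner ℂ (x - y) (T (x - y))
        = 2 * (inner ℂ x (T y) + inner ℂ y (T x)) := by
      simp only [map_add, map_sub, inner_add_left, inner_add_right, inner_sub_left,
        inner_sub_right]
      ring
    have e2 : ((inner ℂ (x + y) (T (x + y)) : ℂ) - inner ℂ (x - y) (T (x - y))).re
        = 4 * (s * ‖T x‖ ^ 2) := by
      rw [e1, hconj]
      have hww := hz
      simp only [Complex.mul_re, Complex.add_re, Complex.add_im, Complex.conj_re,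
        Complex.conj_im, Complex.re_ofNat, Complex.im_ofNat]
      linarith [hww]
    rw [← e2]
    simp [Complex.sub_re]
  have hpar : ‖x + y‖ * ‖x + y‖ + ‖x - y‖ * ‖x - y‖ = 2 * (‖x‖ * ‖x‖ + ‖y‖ * ‖y‖) :=
    parallelogram_law_with_norm_mul ℂ x y
  have b1 := h (x + y)
  have b2 := h (x - y)
  have hb1 : (inner ℂ (x + y) (T (x + y)) : ℂ).re ≤ c * ‖x + y‖ ^ 2 :=
    le_trans (le_abs_self _) b1
  have hb2 : -(c * ‖x - y‖ ^ 2) ≤ (inner ℂ (x - y) (T (x - y)) : ℂ).re :=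
    neg_le_of_abs_le b2
  have hkey : 4 * (s * ‖T x‖ ^ 2) ≤ 4 * (c * ‖x‖ ^ 2) := by
    rw [← expand]
    rw [hyn] at hpar
    nlinarith [hpar]
  have hs2 : s * ‖T x‖ ^ 2 = ‖x‖ * ‖T x‖ := by
    rw [hs]
    field_simp
  rw [hs2] at hkey
  have : ‖x‖ * ‖T x‖ ≤ c * ‖x‖ ^ 2 := by linarith
  nlinarith

end Aux

section Key

open scoped MatrixOrder

variable {n : ℕ}

lemma opNorm_le_sec_numRadius (A : Matrix (Fin n) (Fin n) ℂ) {α : ℝ}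
    (hα : α ∈ Set.Ico 0 (Real.pi / 2)) (hA : numRange A ⊆ sector α) :
    opNorm A ≤ (Real.cos α)⁻¹ * numRadius A := by
  obtain ⟨hα0, hα2⟩ := hα
  have hπ := Real.pi_pos
  have hcos : 0 < Real.cos α := Real.cos_pos_of_mem_Ioo ⟨by linarith, hα2⟩
  have htan : 0 ≤ Real.tan α := by
    rw [Real.tan_eq_sin_div_cos]
    exact div_nonneg (Real.sin_nonneg_of_nonneg_of_le_pi hα0 (by linarith)) hcos.le
  set H := reM A with hHdef
  set K := imM A with hKdef
  have hHh : H.IsHermitian := reM_isHermitian A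
  have hKh : K.IsHermitian := imM_isHermitian A
  have hsec := sector_facts A hA
  have hH : H.PosDef := by
    refine Matrix.PosDef.of_dotProduct_mulVec_pos hHh fun x hx => ?_
    rw [hHdef, qf_reM]
    exact Complex.zero_lt_real.mpr (hsec x hx).1
  set S := CFC.sqrt H with hSdef
  have hS : S.PosSemidef := (CFC.sqrt_nonneg H).posSemidef
  have hSS : S * S = H := CFC.sqrt_mul_sqrt_self H hH.posSemidef.nonneg
  have hdet : IsUnit S.det := by
    rw [isUnit_iff_ne_zero]
    intro h0
    have hdet0 : H.det = 0 := by rw [← hSS, det_mul, h0, mul_zero]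
    have := hH.det_pos
    rw [hdet0] at this
    exact lt_irrefl _ this
  have hSi : S * S⁻¹ = 1 := mul_nonsing_inv S hdet
  have hSi' : S⁻¹ * S = 1 := nonsing_inv_mul S hdet
  have hSiH : S⁻¹ᴴ = S⁻¹ := by rw [conjTranspose_nonsing_inv, hS.1]
  set T := S⁻¹ * K * S⁻¹ with hTdef
  have hTh : T.IsHermitian := by
    unfold Matrix.IsHermitian
    rw [hTdef, conjTranspose_mul, conjTranspose_mul, hSiH, hKh.eq, mul_assoc]
  have hSTS : S * T * S = K := by
    rw [hTdef]
    calc S * (S⁻¹ * K * S⁻¹) * S = (S * S⁻¹) * K * (S⁻¹ * S) := by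
          simp only [mul_assoc]
      _ = K := by rw [hSi, hSi', one_mul, mul_one]
  have hAeq : A = S * (1 + Complex.I • T) * S := by
    have e : S * (1 + Complex.I • T) * S = S * S + Complex.I • (S * T * S) := by
      rw [mul_add, mul_one, add_mul, mul_smul_comm, smul_mul_assoc]
    rw [e, hSS, hSTS, hHdef, hKdef]
    exact (reM_add_I_imM A).symm
  -- Hermitian helper
  have hHerm : ∀ (M N : Matrix (Fin n) (Fin n) ℂ), M.IsHermitian → N.IsHermitian →
      (((Real.tan α : ℝ) : ℂ) • M - N).IsHermitian := by
    intro M N hM hN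
    unfold Matrix.IsHermitian
    rw [conjTranspose_sub, conjTranspose_smul, hM.eq, hN.eq, Complex.star_def,
      Complex.conj_ofReal]
  -- PSD of tan α • H ∓ K
  have hPp : (((Real.tan α : ℝ) : ℂ) • H - K).PosSemidef := by
    refine Matrix.PosSemidef.of_dotProduct_mulVec_nonneg (hHerm H K hHh hKh) fun x => ?_
    have hform : star x ⬝ᵥ ((((Real.tan α : ℝ) : ℂ) • H - K) *ᵥ x)
        = ((Real.tan α * (star x ⬝ᵥ A *ᵥ x).re - (star x ⬝ᵥ A *ᵥ x).im : ℝ) : ℂ) := by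
      rw [sub_mulVec, dotProduct_sub, smul_mulVec, dotProduct_smul, hHdef, hKdef,
        qf_reM, qf_imM]
      simp only [smul_eq_mul]
      push_cast
      ring
    rw [hform, Complex.zero_le_real]
    rcases eq_or_ne x 0 with rfl | hx
    · simp [Matrix.mulVec_zero]
    · obtain ⟨h1, h2⟩ := hsec x hx
      linarith [le_abs_self (star x ⬝ᵥ A *ᵥ x).im]
  have hPm : (((Real.tan α : ℝ) : ℂ) • H + K).PosSemidef := by
    have hherm : (((Real.tan α : ℝ) : ℂ) • H + K).IsHermitian := by
      have := hHerm H (-K) hHh hKh.neg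
      simpa [sub_neg_eq_add] using this
    refine Matrix.PosSemidef.of_dotProduct_mulVec_nonneg hherm fun x => ?_
    have hform : star x ⬝ᵥ ((((Real.tan α : ℝ) : ℂ) • H + K) *ᵥ x)
        = ((Real.tan α * (star x ⬝ᵥ A *ᵥ x).re + (star x ⬝ᵥ A *ᵥ x).im : ℝ) : ℂ) := by
      rw [add_mulVec, dotProduct_add, smul_mulVec, dotProduct_smul, hHdef, hKdef,
        qf_reM, qf_imM]
      simp only [smul_eq_mul]
      push_cast
      ring
    rw [hform, Complex.zero_le_real]
    rcases eq_or_ne x 0 with rfl | hx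
    · simp [Matrix.mulVec_zero]
    · obtain ⟨h1, h2⟩ := hsec x hx
      linarith [neg_abs_le (star x ⬝ᵥ A *ᵥ x).im]
  -- congruence: PSD of tan α • 1 ∓ T
  have hone : S⁻¹ * H * S⁻¹ = 1 := by
    rw [← hSS]
    calc S⁻¹ * (S * S) * S⁻¹ = (S⁻¹ * S) * (S * S⁻¹) := by simp only [mul_assoc]
      _ = 1 := by rw [hSi, hSi', one_mul]
  have hTp : (((Real.tan α : ℝ) : ℂ) • (1 : Matrix (Fin n) (Fin n) ℂ) - T).PosSemidef := by
    have he : ((Real.tan α : ℝ) : ℂ) • (1 : Matrix (Fin n) (Fin n) ℂ) - T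
        = S⁻¹ᴴ * ((((Real.tan α : ℝ) : ℂ)) • H - K) * S⁻¹ := by
      rw [hSiH, mul_sub, sub_mul, mul_smul_comm, smul_mul_assoc, hone, hTdef]
    rw [he]
    exact hPp.conjTranspose_mul_mul_same S⁻¹
  have hTm : (((Real.tan α : ℝ) : ℂ) • (1 : Matrix (Fin n) (Fin n) ℂ) + T).PosSemidef := by
    have he : ((Real.tan α : ℝ) : ℂ) • (1 : Matrix (Fin n) (Fin n) ℂ) + T
        = S⁻¹ᴴ * ((((Real.tan α : ℝ) : ℂ)) • H + K) * S⁻¹ := by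
      rw [hSiH, mul_add, add_mul, mul_smul_comm, smul_mul_assoc, hone, hTdef]
    rw [he]
    exact hPm.conjTranspose_mul_mul_same S⁻¹
  -- move to operators
  have hfTsa : IsSelfAdjoint (Matrix.toEuclideanCLM (n := Fin n) (𝕜 := ℂ) T) := by
    have hstar : star T = T := by rw [Matrix.star_eq_conjTranspose, hTh.eq]
    show star (Matrix.toEuclideanCLM (n := Fin n) (𝕜 := ℂ) T) = Matrix.toEuclideanCLM (n := Fin n) (𝕜 := ℂ) T
    rw [← map_star, hstar]
  have hdotself : ∀ x : EuclideanSpace ℂ (Fin n),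
      star (x : Fin n → ℂ) ⬝ᵥ (x : Fin n → ℂ) = (((‖x‖ ^ 2 : ℝ)) : ℂ) := by
    intro x
    have h := inner_self_eq_norm_sq_to_K (𝕜 := ℂ) x
    rw [show (inner ℂ x x : ℂ) = star (x : Fin n → ℂ) ⬝ᵥ (x : Fin n → ℂ) from (EuclideanSpace.inner_eq_star_dotProduct _ _).trans (dotProduct_comm _ _)] at h
    rw [h]
    norm_cast
  have hfT : ‖Matrix.toEuclideanCLM (n := Fin n) (𝕜 := ℂ) T‖ ≤ Real.tan α := by
    refine selfadjoint_norm_le _ hfTsa htan fun x => ?_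
    have h1 : (inner ℂ x (Matrix.toEuclideanCLM (n := Fin n) (𝕜 := ℂ) T x) : ℂ)
        = star (x : Fin n → ℂ) ⬝ᵥ T *ᵥ (x : Fin n → ℂ) :=
          (EuclideanSpace.inner_eq_star_dotProduct _ _).trans (dotProduct_comm _ _)
    rw [h1]
    have hp := hTp.dotProduct_mulVec_nonneg (x : Fin n → ℂ)
    have hm := hTm.dotProduct_mulVec_nonneg (x : Fin n → ℂ)
    rw [sub_mulVec, dotProduct_sub, smul_mulVec, dotProduct_smul, one_mulVec,
      hdotself x] at hp
    rw [add_mulVec, dotProduct_add, smul_mulVec, dotProduct_smul, one_mulVec,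
      hdotself x] at hm
    have hp' := (Complex.le_def.mp hp).1
    have hm' := (Complex.le_def.mp hm).1
    simp only [Complex.zero_re, Complex.sub_re, Complex.add_re, smul_eq_mul, Complex.mul_re,
      Complex.ofReal_re, Complex.ofReal_im, zero_mul, sub_zero] at hp' hm'
    rw [abs_le]
    constructor <;> linarith
  have hsec2 : 1 + Real.tan α ^ 2 = ((Real.cos α)⁻¹) ^ 2 := by
    have h := Real.inv_one_add_tan_sq hcos.ne'
    rw [inv_pow, ← h, inv_inv]
  have hf1T : ‖Matrix.toEuclideanCLM (n := Fin n) (𝕜 := ℂ) (1 + Complex.I • T)‖ ≤ (Real.cos α)⁻¹ := by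
    refine ContinuousLinearMap.opNorm_le_bound
      (Matrix.toEuclideanCLM (n := Fin n) (𝕜 := ℂ) (1 + Complex.I • T)) (inv_nonneg.mpr hcos.le) fun x => ?_
    have hx1 : Matrix.toEuclideanCLM (n := Fin n) (𝕜 := ℂ) (1 + Complex.I • T) x
        = x + Complex.I • (Matrix.toEuclideanCLM (n := Fin n) (𝕜 := ℂ) T x) := by
      rw [map_add, _root_.map_smul, _root_.map_one]
      simp only [ContinuousLinearMap.add_apply, ContinuousLinearMap.smul_apply,
        ContinuousLinearMap.one_apply]
    have him0 : (inner ℂ x (Matrix.toEuclideanCLM (n := Fin n) (𝕜 := ℂ) T x) : ℂ).im = 0 := by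
      have h1 : (inner ℂ x (Matrix.toEuclideanCLM (n := Fin n) (𝕜 := ℂ) T x) : ℂ)
          = star (x : Fin n → ℂ) ⬝ᵥ T *ᵥ (x : Fin n → ℂ) :=
          (EuclideanSpace.inner_eq_star_dotProduct _ _).trans (dotProduct_comm _ _)
      rw [h1]
      exact qf_real_of_isHermitian hTh _
    have hTxn : ‖Matrix.toEuclideanCLM (n := Fin n) (𝕜 := ℂ) T x‖ ≤ Real.tan α * ‖x‖ :=
      le_trans (ContinuousLinearMap.le_opNorm _ x)
        (mul_le_mul_of_nonneg_right hfT (norm_nonneg x))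
    have hsq : ‖x + Complex.I • (Matrix.toEuclideanCLM (n := Fin n) (𝕜 := ℂ) T x)‖ ^ 2
        = ‖x‖ ^ 2 + ‖Matrix.toEuclideanCLM (n := Fin n) (𝕜 := ℂ) T x‖ ^ 2 := by
      rw [norm_add_sq (𝕜 := ℂ), inner_smul_right, norm_smul, Complex.norm_I, one_mul]
      have hre : RCLike.re (Complex.I * (inner ℂ x (Matrix.toEuclideanCLM (n := Fin n) (𝕜 := ℂ) T x) : ℂ))
          = 0 := by
        rw [RCLike.re_to_complex, Complex.mul_re, Complex.I_re, Complex.I_im, him0]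
        ring
      rw [hre]
      ring
    rw [hx1]
    have h2 : ‖x + Complex.I • (Matrix.toEuclideanCLM (n := Fin n) (𝕜 := ℂ) T x)‖ ^ 2
        ≤ ((Real.cos α)⁻¹ * ‖x‖) ^ 2 := by
      rw [hsq, mul_pow, ← hsec2]
      have hmul := mul_le_mul hTxn hTxn (norm_nonneg _) (mul_nonneg htan (norm_nonneg x))
      nlinarith [norm_nonneg x]
    have h3 := Real.sqrt_le_sqrt h2
    rwa [Real.sqrt_sq (norm_nonneg _), Real.sqrt_sq (by positivity)] at h3
  have hfS : ‖Matrix.toEuclideanCLM (n := Fin n) (𝕜 := ℂ) S‖ ≤ Real.sqrt (numRadius A) := by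
    refine ContinuousLinearMap.opNorm_le_bound
      (Matrix.toEuclideanCLM (n := Fin n) (𝕜 := ℂ) S) (Real.sqrt_nonneg _) fun x => ?_
    have e1 := ContinuousLinearMap.adjoint_inner_right (Matrix.toEuclideanCLM (n := Fin n) (𝕜 := ℂ) S) x
      (Matrix.toEuclideanCLM (n := Fin n) (𝕜 := ℂ) S x)
    have e1' : (ContinuousLinearMap.adjoint (Matrix.toEuclideanCLM (n := Fin n) (𝕜 := ℂ) S))
        (Matrix.toEuclideanCLM (n := Fin n) (𝕜 := ℂ) S x) = Matrix.toEuclideanCLM (n := Fin n) (𝕜 := ℂ) H x := by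
      rw [← ContinuousLinearMap.star_eq_adjoint, ← map_star,
        show star S = S from by rw [Matrix.star_eq_conjTranspose, hS.1],
        show (Matrix.toEuclideanCLM (n := Fin n) (𝕜 := ℂ) S) ((Matrix.toEuclideanCLM (n := Fin n) (𝕜 := ℂ) S) x)
          = (Matrix.toEuclideanCLM (n := Fin n) (𝕜 := ℂ) S * Matrix.toEuclideanCLM (n := Fin n) (𝕜 := ℂ) S) x from rfl,
        ← _root_.map_mul, hSS]
    rw [e1'] at e1
    have e2 := congrArg Complex.re e1
    rw [show (inner ℂ x (Matrix.toEuclideanCLM (n := Fin n) (𝕜 := ℂ) H x) : ℂ)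
        = star (x : Fin n → ℂ) ⬝ᵥ H *ᵥ (x : Fin n → ℂ) from (EuclideanSpace.inner_eq_star_dotProduct _ _).trans (dotProduct_comm _ _)] at e2
    have hsq : ‖Matrix.toEuclideanCLM (n := Fin n) (𝕜 := ℂ) S x‖ ^ 2
        = (star (x : Fin n → ℂ) ⬝ᵥ H *ᵥ (x : Fin n → ℂ)).re := by
      rw [e2]
      simpa using (inner_self_eq_norm_sq (𝕜 := ℂ) (Matrix.toEuclideanCLM (n := Fin n) (𝕜 := ℂ) S x)).symm
    have hH_A : (star (x : Fin n → ℂ) ⬝ᵥ H *ᵥ (x : Fin n → ℂ)).re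
        = (star (x : Fin n → ℂ) ⬝ᵥ A *ᵥ (x : Fin n → ℂ)).re := by
      rw [hHdef, qf_reM]
      simp
    have hb : (star (x : Fin n → ℂ) ⬝ᵥ A *ᵥ (x : Fin n → ℂ)).re ≤ numRadius A * ‖x‖ ^ 2 :=
      le_trans (Complex.re_le_norm _) (abs_qf_le A x)
    have h2 : ‖Matrix.toEuclideanCLM (n := Fin n) (𝕜 := ℂ) S x‖ ^ 2
        ≤ (Real.sqrt (numRadius A) * ‖x‖) ^ 2 := by
      rw [hsq, hH_A, mul_pow, Real.sq_sqrt (numRadius_nonneg A)]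
      exact hb
    have h3 := Real.sqrt_le_sqrt h2
    rwa [Real.sqrt_sq (norm_nonneg _), Real.sqrt_sq (by positivity)] at h3
  have hnormA : opNorm A = ‖Matrix.toEuclideanCLM (n := Fin n) (𝕜 := ℂ) S
      * Matrix.toEuclideanCLM (n := Fin n) (𝕜 := ℂ) (1 + Complex.I • T)
      * Matrix.toEuclideanCLM (n := Fin n) (𝕜 := ℂ) S‖ := by
    have h : ‖Matrix.toEuclideanCLM (n := Fin n) (𝕜 := ℂ) A‖
        = ‖Matrix.toEuclideanCLM (n := Fin n) (𝕜 := ℂ) (S * (1 + Complex.I • T) * S)‖ := by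
      rw [← hAeq]
    rw [_root_.map_mul, _root_.map_mul] at h
    exact h
  rw [hnormA]
  calc ‖Matrix.toEuclideanCLM (n := Fin n) (𝕜 := ℂ) S * Matrix.toEuclideanCLM (n := Fin n) (𝕜 := ℂ) (1 + Complex.I • T)
      * Matrix.toEuclideanCLM (n := Fin n) (𝕜 := ℂ) S‖
      ≤ ‖Matrix.toEuclideanCLM (n := Fin n) (𝕜 := ℂ) S * Matrix.toEuclideanCLM (n := Fin n) (𝕜 := ℂ) (1 + Complex.I • T)‖
        * ‖Matrix.toEuclideanCLM (n := Fin n) (𝕜 := ℂ) S‖ := norm_mul_le _ _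
    _ ≤ (‖Matrix.toEuclideanCLM (n := Fin n) (𝕜 := ℂ) S‖
        * ‖Matrix.toEuclideanCLM (n := Fin n) (𝕜 := ℂ) (1 + Complex.I • T)‖)
        * ‖Matrix.toEuclideanCLM (n := Fin n) (𝕜 := ℂ) S‖ :=
      mul_le_mul_of_nonneg_right (norm_mul_le _ _) (norm_nonneg _)
    _ ≤ (Real.sqrt (numRadius A) * (Real.cos α)⁻¹) * Real.sqrt (numRadius A) :=
      mul_le_mul (mul_le_mul hfS hf1T (norm_nonneg _) (Real.sqrt_nonneg _)) hfS
        (norm_nonneg _) (by positivity)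
    _ = (Real.cos α)⁻¹ * numRadius A := by
      rw [show Real.sqrt (numRadius A) * (Real.cos α)⁻¹ * Real.sqrt (numRadius A)
        = (Real.cos α)⁻¹ * (Real.sqrt (numRadius A) * Real.sqrt (numRadius A)) by ring,
        Real.mul_self_sqrt (numRadius_nonneg A)]

end Key

section Final

variable {n : ℕ}

lemma numRange_smul (c : ℂ) (X : Matrix (Fin n) (Fin n) ℂ) :
    numRange (c • X) = (c * ·) '' numRange X := by
  ext q
  constructor
  · rintro ⟨x, hx, rfl⟩
    refine ⟨star (x : Fin n → ℂ) ⬝ᵥ X *ᵥ (x : Fin n → ℂ), ⟨x, hx, rfl⟩, ?_⟩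
    rw [smul_mulVec, dotProduct_smul, smul_eq_mul]
  · rintro ⟨p, ⟨x, hx, rfl⟩, rfl⟩
    refine ⟨x, hx, ?_⟩
    rw [smul_mulVec, dotProduct_smul, smul_eq_mul]

lemma numRadius_smul_unit {c : ℂ} (hc : ‖c‖ = 1) (X : Matrix (Fin n) (Fin n) ℂ) :
    numRadius (c • X) = numRadius X := by
  unfold numRadius
  rw [numRange_smul]
  congr 1
  calc (fun z : ℂ => ‖z‖) '' ((c * ·) '' numRange X)
      = (fun p => ‖c * p‖) '' numRange X := by
        rw [← Set.image_comp]
        rfl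
    _ = (fun z : ℂ => ‖z‖) '' numRange X :=
        Set.image_congr fun p _ => by rw [norm_mul, hc, one_mul]

lemma opNorm_smul_unit {c : ℂ} (hc : ‖c‖ = 1) (X : Matrix (Fin n) (Fin n) ℂ) :
    opNorm (c • X) = opNorm X := by
  unfold opNorm
  rw [_root_.map_smul]
  rw [norm_smul c (Matrix.toEuclideanCLM (n := Fin n) (𝕜 := ℂ) X)]
  rw [hc, one_mul]

lemma numRadius_le_opNorm_mul (X Y : Matrix (Fin n) (Fin n) ℂ) :
    numRadius (X * Y) ≤ opNorm X * opNorm Y := by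
  have hXY : opNorm (X * Y) ≤ opNorm X * opNorm Y := by
    unfold opNorm
    rw [_root_.map_mul]
    exact norm_mul_le _ _
  have h0 : (0:ℝ) ≤ opNorm (X * Y) := norm_nonneg _
  refine Real.sSup_le ?_ (le_trans h0 hXY)
  rintro r ⟨q, ⟨x, hx, rfl⟩, rfl⟩
  refine le_trans ?_ hXY
  simpa [hx] using norm_dot_le_opNorm (X * Y) x

end Final

theorem numRadius_mul_le_sec_sec {n : ℕ} (X Y : Matrix (Fin n) (Fin n) ℂ)
    (α₁ α₂ : ℝ) (hα₁ : α₁ ∈ Set.Ico 0 (Real.pi / 2)) (hα₂ : α₂ ∈ Set.Ico 0 (Real.pi / 2))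
    (z w : ℂ) (hz : ‖z‖ = 1) (hw : ‖w‖ = 1)
    (hX : numRange (z • X) ⊆ sector α₁) (hY : numRange (w • Y) ⊆ sector α₂) :
    numRadius (X * Y) ≤ (Real.cos α₁)⁻¹ * (Real.cos α₂)⁻¹ * numRadius X * numRadius Y := by
  have hπ := Real.pi_pos
  have hcos₁ : 0 < Real.cos α₁ :=
    Real.cos_pos_of_mem_Ioo ⟨by linarith [hα₁.1], hα₁.2⟩
  have hcos₂ : 0 < Real.cos α₂ :=
    Real.cos_pos_of_mem_Ioo ⟨by linarith [hα₂.1], hα₂.2⟩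
  have h1 : opNorm X ≤ (Real.cos α₁)⁻¹ * numRadius X := by
    rw [← opNorm_smul_unit hz X, ← numRadius_smul_unit hz X]
    exact opNorm_le_sec_numRadius _ hα₁ hX
  have h2 : opNorm Y ≤ (Real.cos α₂)⁻¹ * numRadius Y := by
    rw [← opNorm_smul_unit hw Y, ← numRadius_smul_unit hw Y]
    exact opNorm_le_sec_numRadius _ hα₂ hY
  have h0 := numRadius_le_opNorm_mul X Y
  have hYn : (0:ℝ) ≤ opNorm Y := norm_nonneg _
  have hb1 : (0:ℝ) ≤ (Real.cos α₁)⁻¹ * numRadius X :=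
    mul_nonneg (inv_nonneg.mpr hcos₁.le) (numRadius_nonneg X)
  calc numRadius (X * Y) ≤ opNorm X * opNorm Y := h0
    _ ≤ ((Real.cos α₁)⁻¹ * numRadius X) * ((Real.cos α₂)⁻¹ * numRadius Y) :=
        mul_le_mul h1 h2 hYn hb1
    _ = (Real.cos α₁)⁻¹ * (Real.cos α₂)⁻¹ * numRadius X * numRadius Y := by ring
end

section
/- Let X, Y ∈ M_n(ℂ) with unit-modulus z, w such that W(zX) ⊂ S_{α₁} and W(wY) ⊂ S_{α₂}. Then ω(X ∘ Y) ≤ sec(α₁) sec(α₂) ω(X) ω(Y), where ∘ is the Hadamard product. -/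
open Matrix Complex
open scoped ComplexOrder

namespace NRaux
set_option linter.unusedSectionVars false
set_option maxHeartbeats 1000000

variable {m : Type*} [Fintype m] [DecidableEq m]

noncomputable def sq (M : Matrix m m ℂ) (x y : m → ℂ) : ℂ := star x ⬝ᵥ M.mulVec y

lemma sq_conjTranspose (M : Matrix m m ℂ) (x y : m → ℂ) :
    sq Mᴴ x y = starRingEnd ℂ (sq M y x) := by
  simp only [sq, dotProduct, mulVec, conjTranspose_apply, map_sum, Pi.star_apply, RingHom.map_mul,
    Finset.mul_sum]
  rw [Finset.sum_comm]
  congr 1; ext i; congr 1; ext j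
  simp [mul_comm, mul_left_comm, RCLike.star_def]

lemma sq_smul (c : ℂ) (M : Matrix m m ℂ) (x y : m → ℂ) : sq (c • M) x y = c * sq M x y := by
  simp [sq, smul_mulVec, dotProduct_smul, smul_eq_mul]

lemma sq_add (M N : Matrix m m ℂ) (x y : m → ℂ) : sq (M + N) x y = sq M x y + sq N x y := by
  simp [sq, add_mulVec, dotProduct_add]

lemma sq_sub (M N : Matrix m m ℂ) (x y : m → ℂ) : sq (M - N) x y = sq M x y - sq N x y := by
  simp [sq, sub_mulVec, dotProduct_sub]

lemma sq_smul_right (c : ℂ) (M : Matrix m m ℂ) (x y : m → ℂ) :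
    sq M x (c • y) = c * sq M x y := by
  simp [sq, mulVec_smul, dotProduct_smul, smul_eq_mul]

lemma sq_smul_left (c : ℂ) (M : Matrix m m ℂ) (x y : m → ℂ) :
    sq M (c • x) y = starRingEnd ℂ c * sq M x y := by
  simp only [sq, star_smul, smul_dotProduct, smul_eq_mul, Complex.star_def]

lemma sq_add_right (M : Matrix m m ℂ) (x y z : m → ℂ) :
    sq M x (y + z) = sq M x y + sq M x z := by
  simp [sq, mulVec_add, dotProduct_add]

lemma sq_add_left (M : Matrix m m ℂ) (x y z : m → ℂ) :
    sq M (x + y) z = sq M x z + sq M y z := by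
  simp [sq, star_add, add_dotProduct]

lemma sq_self_conj {M : Matrix m m ℂ} (h : M.IsHermitian) (x : m → ℂ) :
    starRingEnd ℂ (sq M x x) = sq M x x := by
  conv_lhs => rw [← h.eq, sq_conjTranspose]
  simp

lemma im_sq_self {M : Matrix m m ℂ} (h : M.IsHermitian) (x : m → ℂ) : (sq M x x).im = 0 := by
  have := sq_self_conj h x
  have h2 := congrArg Complex.im this
  simp only [conj_im] at h2
  linarith

lemma posSemidef_iff_re {M : Matrix m m ℂ} (h : M.IsHermitian) :
    M.PosSemidef ↔ ∀ x : m → ℂ, 0 ≤ (sq M x x).re := by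
  constructor
  · intro hp x
    exact (Complex.nonneg_iff.mp (hp.dotProduct_mulVec_nonneg x)).1
  · intro hre
    refine .of_dotProduct_mulVec_nonneg h fun x => ?_
    rw [Complex.nonneg_iff]
    exact ⟨hre x, (im_sq_self h x).symm⟩

/-- Cauchy-Schwarz for a PSD matrix. -/
lemma cauchy_schwarz {H : Matrix m m ℂ} (hH : H.PosSemidef) (x y : m → ℂ) :
    ‖(sq H x y)‖ ≤ Real.sqrt ((sq H x x).re * (sq H y y).re) := by
  have hsymm : sq H y x = starRingEnd ℂ (sq H x y) := by
    conv_lhs => rw [← hH.1.eq, sq_conjTranspose]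
  set b := sq H x y with hb
  -- phase u with u * b = |b|
  obtain ⟨u, hu1, hub⟩ : ∃ u : ℂ, ‖u‖ = 1 ∧ u * b = ‖b‖ := by
    by_cases h0 : b = 0
    · exact ⟨1, by simp [h0]⟩
    · have habs : (‖b‖ : ℝ) ≠ 0 := by simpa using h0
      refine ⟨(starRingEnd ℂ b) / ‖b‖, ?_, ?_⟩
      · simp [map_div₀, h0]
      · rw [div_mul_eq_mul_div, mul_comm, Complex.mul_conj]
        rw [show (Complex.normSq b : ℂ) = (‖b‖ : ℂ) ^ 2 by
          rw [← Complex.sq_norm]; push_cast; ring]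
        field_simp
  have huu : starRingEnd ℂ u * u = 1 := by
    have h1 := Complex.mul_conj u
    rw [mul_comm] at h1
    rw [h1, Complex.normSq_eq_norm_sq, hu1]; simp
  have hcb : starRingEnd ℂ u * starRingEnd ℂ b = (‖b‖ : ℂ) := by
    rw [← _root_.map_mul, hub]; exact Complex.conj_ofReal _
  have key : ∀ t : ℝ, 0 ≤ (sq H x x).re * (t * t) + (2 * ‖b‖) * t + (sq H y y).re := by
    intro t
    have expand : sq H ((t:ℂ) • x + u • y) ((t:ℂ) • x + u • y)
        = ((t * t : ℝ) : ℂ) * sq H x x + ((2 * t * ‖b‖ : ℝ) : ℂ) + sq H y y := by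
      simp only [sq_add_left, sq_add_right, sq_smul_left, sq_smul_right, hsymm, ← hb]
      rw [Complex.conj_ofReal]
      push_cast
      linear_combination (t:ℂ) * hcb + (t:ℂ) * hub + (sq H y y) * huu
    have h0 := (posSemidef_iff_re hH.1).mp hH ((t:ℂ) • x + u • y)
    rw [expand] at h0
    simp only [Complex.add_re, Complex.ofReal_re, Complex.re_ofReal_mul] at h0
    linarith [h0]
  have hd := discrim_le_zero key
  have hb2 : (2 * ‖b‖) ^ 2 - 4 * (sq H x x).re * (sq H y y).re ≤ 0 := by
    simpa [discrim] using hd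
  have habs : (‖b‖) ^ 2 ≤ (sq H x x).re * (sq H y y).re := by nlinarith
  calc ‖b‖ = Real.sqrt ((‖b‖) ^ 2) := by
        rw [Real.sqrt_sq (norm_nonneg _)]
    _ ≤ Real.sqrt ((sq H x x).re * (sq H y y).re) := Real.sqrt_le_sqrt habs


lemma dot_expand (P : Matrix m m ℂ) (v w : m → ℂ) :
    star v ⬝ᵥ P *ᵥ w = ∑ i, ∑ j, star (v i) * P i j * w j := by
  simp [dotProduct, mulVec, Finset.mul_sum, mul_assoc]

/-- Schur product theorem. -/
lemma posSemidef_hadamard {M N : Matrix m m ℂ} (hM : M.PosSemidef) (hN : N.PosSemidef) :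
    (M ⊙ N).PosSemidef := by
  obtain ⟨C, hC⟩ : ∃ C : Matrix m m ℂ, M = Cᴴ * C := by
    open scoped MatrixOrder Matrix.Norms.L2Operator in
    exact CStarAlgebra.nonneg_iff_eq_star_mul_self.mp hM.nonneg
  have herm : (M ⊙ N).IsHermitian := by
    unfold Matrix.IsHermitian
    ext i j
    simp only [conjTranspose_apply, Matrix.hadamard_apply, star_mul']
    rw [← conjTranspose_apply M, ← conjTranspose_apply N, hM.1, hN.1, mul_comm]
  refine .of_dotProduct_mulVec_nonneg herm fun x => ?_
  have key : star x ⬝ᵥ (M ⊙ N) *ᵥ x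
      = ∑ k : m, star (fun i => C k i * x i) ⬝ᵥ N *ᵥ (fun i => C k i * x i) := by
    simp only [dot_expand]
    conv_rhs => rw [Finset.sum_comm]
    refine Finset.sum_congr rfl fun i _ => ?_
    conv_rhs => rw [Finset.sum_comm]
    refine Finset.sum_congr rfl fun j _ => ?_
    have hM' : M i j = ∑ k, star (C k i) * C k j := by
      rw [hC, Matrix.mul_apply]
      simp [conjTranspose_apply]
    rw [Matrix.hadamard_apply, hM', Finset.sum_mul, Finset.mul_sum, Finset.sum_mul]
    refine Finset.sum_congr rfl fun k _ => ?_
    simp only [star_mul']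
    ring
  rw [key]
  exact Finset.sum_nonneg fun k _ => hN.dotProduct_mulVec_nonneg _

noncomputable def nsq {n : ℕ} (x : Fin n → ℂ) : ℝ := ∑ i, Complex.normSq (x i)

variable {n : ℕ}

lemma nsq_nonneg (x : Fin n → ℂ) : 0 ≤ nsq x :=
  Finset.sum_nonneg fun i _ => Complex.normSq_nonneg _

lemma norm_eq_sqrt_nsq (x : EuclideanSpace ℂ (Fin n)) : ‖x‖ = Real.sqrt (nsq x) := by
  rw [EuclideanSpace.norm_eq]
  congr 1
  refine Finset.sum_congr rfl fun i _ => ?_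
  rw [← Complex.sq_norm]

lemma mem_numRange_iff {M : Matrix (Fin n) (Fin n) ℂ} {c : ℂ} :
    c ∈ numRange M ↔ ∃ x : Fin n → ℂ, nsq x = 1 ∧ c = sq M x x := by
  constructor
  · rintro ⟨x, hx, rfl⟩
    refine ⟨x, ?_, rfl⟩
    have h := norm_eq_sqrt_nsq x
    rw [hx] at h
    have := nsq_nonneg (n := n) x
    nlinarith [Real.sq_sqrt this, h.symm]
  · rintro ⟨x, hx, rfl⟩
    refine ⟨WithLp.toLp 2 x, ?_, rfl⟩
    rw [norm_eq_sqrt_nsq]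
    · show Real.sqrt (nsq x) = 1
      rw [hx, Real.sqrt_one]

lemma nsq_smul_real (c : ℝ) (x : Fin n → ℂ) : nsq ((c : ℂ) • x) = c ^ 2 * nsq x := by
  unfold nsq
  rw [Finset.mul_sum]
  refine Finset.sum_congr rfl fun i _ => ?_
  simp [Complex.normSq_apply, Pi.smul_apply, Complex.ofReal_re]
  ring

lemma sq_smul_real (M : Matrix (Fin n) (Fin n) ℂ) (c : ℝ) (x : Fin n → ℂ) :
    sq M ((c : ℂ) • x) ((c : ℂ) • x) = ((c ^ 2 : ℝ) : ℂ) * sq M x x := by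
  unfold sq
  rw [star_smul, smul_dotProduct, mulVec_smul, dotProduct_smul]
  simp only [smul_eq_mul, Complex.star_def, Complex.conj_ofReal]
  push_cast
  ring

lemma bddAbove_abs_numRange (M : Matrix (Fin n) (Fin n) ℂ) :
    BddAbove ((fun z : ℂ => ‖z‖) '' numRange M) := by
  refine ⟨∑ i, ∑ j, ‖(M i j)‖, ?_⟩
  rintro a ⟨c, hc, rfl⟩
  obtain ⟨x, hx, rfl⟩ := mem_numRange_iff.mp hc
  have hxi : ∀ i, ‖(x i)‖ ≤ 1 := by
    intro i
    have h1 : Complex.normSq (x i) ≤ 1 := by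
      rw [← hx]
      exact Finset.single_le_sum (f := fun i => Complex.normSq (x i))
        (fun i _ => Complex.normSq_nonneg _) (Finset.mem_univ i)
    have := Complex.sq_norm (x i)
    nlinarith [norm_nonneg (x i)]
  show ‖(sq M x x)‖ ≤ _
  unfold sq
  rw [dot_expand]
  refine le_trans (norm_sum_le _ _) (Finset.sum_le_sum fun i _ => ?_)
  refine le_trans (norm_sum_le _ _) (Finset.sum_le_sum fun j _ => ?_)
  rw [norm_mul, norm_mul]
  have h1 : ‖(star (x i))‖ ≤ 1 := by
    rw [RCLike.star_def, Complex.norm_conj]; exact hxi i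
  calc ‖(star (x i))‖ * ‖(M i j)‖ * ‖(x j)‖
      ≤ 1 * ‖(M i j)‖ * 1 := by
        apply mul_le_mul (mul_le_mul h1 le_rfl (norm_nonneg _) zero_le_one) (hxi j)
          (norm_nonneg _)
        positivity
    _ = ‖(M i j)‖ := by ring

lemma numRadius_nonneg (M : Matrix (Fin n) (Fin n) ℂ) : 0 ≤ numRadius M :=
  Real.sSup_nonneg (by rintro a ⟨c, _, rfl⟩; exact norm_nonneg _)

lemma abs_sq_le_radius {M : Matrix (Fin n) (Fin n) ℂ} {x : Fin n → ℂ} (hx : nsq x = 1) :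
    ‖(sq M x x)‖ ≤ numRadius M :=
  le_csSup (bddAbove_abs_numRange M) ⟨_, mem_numRange_iff.mpr ⟨x, hx, rfl⟩, rfl⟩

lemma abs_sq_le_radius' (M : Matrix (Fin n) (Fin n) ℂ) (x : Fin n → ℂ) :
    ‖(sq M x x)‖ ≤ numRadius M * nsq x := by
  by_cases hx : nsq x = 0
  · have hx0 : x = 0 := by
      funext i
      have : Complex.normSq (x i) = 0 := by
        have := Finset.sum_eq_zero_iff_of_nonneg
          (fun i (_ : i ∈ Finset.univ) => Complex.normSq_nonneg (x i))
        exact (this.mp hx) i (Finset.mem_univ i)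
      simpa using Complex.normSq_eq_zero.mp this
    subst hx0
    simp [sq, hx]
  · have hpos : 0 < nsq x := lt_of_le_of_ne (nsq_nonneg x) (Ne.symm hx)
    set r : ℝ := Real.sqrt (nsq x) with hr
    have hrpos : 0 < r := Real.sqrt_pos.mpr hpos
    have hr2 : r ^ 2 = nsq x := Real.sq_sqrt hpos.le
    have h1 : nsq (((r⁻¹ : ℝ) : ℂ) • x) = 1 := by
      rw [nsq_smul_real, ← hr2]
      field_simp
    have h2 := abs_sq_le_radius (M := M) h1
    rw [sq_smul_real, norm_mul] at h2
    have h3' : (r⁻¹) ^ 2 = (nsq x)⁻¹ := by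
      rw [← hr2]
      field_simp
    have h3 : ‖(((r⁻¹ ^ 2 : ℝ) : ℂ))‖ = (nsq x)⁻¹ := by
      rw [Complex.norm_real, Real.norm_eq_abs, _root_.abs_of_nonneg (by positivity : (0:ℝ) ≤ r⁻¹ ^ 2), h3']
    rw [h3] at h2
    calc ‖(sq M x x)‖ = (nsq x)⁻¹ * ‖(sq M x x)‖ * nsq x := by
          field_simp
    _ ≤ numRadius M * nsq x := by nlinarith [norm_nonneg (sq M x x)]


/-! ### sqrt Cauchy lemma -/

lemma sqrt_add_sqrt_le {a b c d : ℝ} (ha : 0 ≤ a) (hb : 0 ≤ b) (hc : 0 ≤ c) (hd : 0 ≤ d) :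
    Real.sqrt (a * c) + Real.sqrt (b * d) ≤ Real.sqrt ((a + b) * (c + d)) := by
  have h1 : (Real.sqrt (a * c) + Real.sqrt (b * d)) ^ 2 ≤ (a + b) * (c + d) := by
    have e1 : Real.sqrt (a * c) ^ 2 = a * c := Real.sq_sqrt (by positivity)
    have e2 : Real.sqrt (b * d) ^ 2 = b * d := Real.sq_sqrt (by positivity)
    have e3 : Real.sqrt (a * c) * Real.sqrt (b * d) = Real.sqrt (a * d) * Real.sqrt (b * c) := by
      rw [← Real.sqrt_mul (by positivity), ← Real.sqrt_mul (by positivity)]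
      ring_nf
    have e4 : Real.sqrt (a * d) ^ 2 = a * d := Real.sq_sqrt (by positivity)
    have e5 : Real.sqrt (b * c) ^ 2 = b * c := Real.sq_sqrt (by positivity)
    nlinarith [sq_nonneg (Real.sqrt (a * d) - Real.sqrt (b * c))]
  calc Real.sqrt (a * c) + Real.sqrt (b * d)
      = Real.sqrt ((Real.sqrt (a * c) + Real.sqrt (b * d)) ^ 2) := by
        rw [Real.sqrt_sq (by positivity)]
    _ ≤ Real.sqrt ((a + b) * (c + d)) := Real.sqrt_le_sqrt h1

lemma two_sqrt_le {a b : ℝ} (ha : 0 ≤ a) (hb : 0 ≤ b) : 2 * Real.sqrt (a * b) ≤ a + b := by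
  nlinarith [sq_nonneg (Real.sqrt a - Real.sqrt b), Real.sq_sqrt ha, Real.sq_sqrt hb,
    Real.sqrt_mul ha b, Real.sqrt_nonneg a, Real.sqrt_nonneg b]

/-! ### the sectorial Cauchy-Schwarz inequality -/

lemma sector_cs {α : ℝ} (hα : α ∈ Set.Ico 0 (Real.pi / 2)) {A : Matrix m m ℂ}
    (hsec : ∀ v : m → ℂ, 0 ≤ (sq A v v).re ∧ |(sq A v v).im| ≤ Real.tan α * (sq A v v).re)
    (x y : m → ℂ) :
    ‖(sq A x y)‖ ≤
      (Real.cos α)⁻¹ * Real.sqrt ((sq A x x).re * (sq A y y).re) := by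
  obtain ⟨hα0, hα1⟩ := hα
  have ht : 0 < Real.cos α := Real.cos_pos_of_mem_Ioo ⟨by linarith [Real.pi_pos], hα1⟩
  have hs : 0 ≤ Real.sin α := Real.sin_nonneg_of_nonneg_of_le_pi hα0 (by linarith [Real.pi_pos])
  set s := Real.sin α with hs_def
  set t := Real.cos α with ht_def
  have hst : s ^ 2 + t ^ 2 = 1 := Real.sin_sq_add_cos_sq α
  -- key form of the sector condition
  have hsec' : ∀ v : m → ℂ, t * |(sq A v v).im| ≤ s * (sq A v v).re := by
    intro v
    have h1 := (hsec v).2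
    have h2 := (hsec v).1
    rw [Real.tan_eq_sin_div_cos] at h1
    calc t * |(sq A v v).im| ≤ t * (s / t * (sq A v v).re) :=
          mul_le_mul_of_nonneg_left h1 ht.le
      _ = s * (sq A v v).re := by field_simp
  rcases eq_or_lt_of_le hs with hs0 | hs0
  · -- case sin α = 0 : A has real quadratic form
    have him : ∀ v : m → ℂ, (sq A v v).im = 0 := by
      intro v
      have := hsec' v
      rw [← hs0] at this
      have habs : |(sq A v v).im| ≤ 0 := by
        by_contra hcon
        push_neg at hcon
        nlinarith
      have := abs_nonneg (sq A v v).im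
      have : |(sq A v v).im| = 0 := le_antisymm habs (abs_nonneg _)
      exact abs_eq_zero.mp this
    set R : Matrix m m ℂ := (1 / 2 : ℂ) • (A + Aᴴ) with hR
    set K : Matrix m m ℂ := (Complex.I / 2) • (A - Aᴴ) with hK
    have hRherm : R.IsHermitian := by
      unfold R
      unfold Matrix.IsHermitian
      rw [Matrix.conjTranspose_smul, Matrix.conjTranspose_add, Matrix.conjTranspose_conjTranspose]
      rw [show star (1 / 2 : ℂ) = (1 / 2 : ℂ) by simp]
      rw [add_comm]
    have hKherm : K.IsHermitian := by
      unfold K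
      unfold Matrix.IsHermitian
      rw [Matrix.conjTranspose_smul, Matrix.conjTranspose_sub, Matrix.conjTranspose_conjTranspose]
      rw [show star (Complex.I / 2 : ℂ) = -(Complex.I / 2) by rw [star_div₀]; simp [neg_div]]
      rw [neg_smul, ← smul_neg, neg_sub]
    have hsqR : ∀ v w : m → ℂ, sq R v w = (1 / 2 : ℂ) * (sq A v w + sq Aᴴ v w) := by
      intro v w; rw [hR, sq_smul, sq_add]
    have hsqK : ∀ v w : m → ℂ, sq K v w = (Complex.I / 2) * (sq A v w - sq Aᴴ v w) := by
      intro v w; rw [hK, sq_smul, sq_sub]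
    have hRre : ∀ v : m → ℂ, (sq R v v).re = (sq A v v).re := by
      intro v
      rw [hsqR, sq_conjTranspose]
      rw [Complex.add_conj]
      simp
    have hKzero : ∀ v : m → ℂ, sq K v v = 0 := by
      intro v
      rw [hsqK, sq_conjTranspose]
      have : sq A v v - starRingEnd ℂ (sq A v v) = (2 * (sq A v v).im : ℝ) * Complex.I := by
        rw [Complex.sub_conj]
        try push_cast
        try ring
      rw [this, him]
      simp
    have hRpsd : R.PosSemidef := (posSemidef_iff_re hRherm).mpr fun v => by
      rw [hRre]; exact (hsec v).1
    have hKpsd : K.PosSemidef := (posSemidef_iff_re hKherm).mpr fun v => by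
      rw [hKzero]; simp
    have hKcs := cauchy_schwarz hKpsd x y
    rw [hKzero, hKzero] at hKcs
    simp only [Complex.zero_re, mul_zero, zero_mul, Real.sqrt_zero] at hKcs
    have hKxy : sq K x y = 0 := by
      have := norm_nonneg (sq K x y)
      have h0 : ‖(sq K x y)‖ = 0 := le_antisymm hKcs this
      exact norm_eq_zero.mp h0
    have hdecomp : sq A x y = sq R x y + (-Complex.I) * sq K x y := by
      rw [hsqR, hsqK]
      have hct := sq_conjTranspose A x y
      have hI := Complex.I_mul_I
      field_simp
      ring_nf
      rw [Complex.I_sq]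
      ring
    have hRcs := cauchy_schwarz hRpsd x y
    rw [hRre, hRre] at hRcs
    have hle1 : (1 : ℝ) ≤ t⁻¹ := by
      have := Real.cos_le_one α
      rw [← ht_def] at this
      rw [le_inv_comm₀ one_pos ht]  -- might not exist; fallback below
      simpa using this
    calc ‖(sq A x y)‖ = ‖(sq R x y)‖ := by
          rw [hdecomp, hKxy]; simp
      _ ≤ Real.sqrt ((sq A x x).re * (sq A y y).re) := hRcs
      _ ≤ t⁻¹ * Real.sqrt ((sq A x x).re * (sq A y y).re) := by
          nlinarith [Real.sqrt_nonneg ((sq A x x).re * (sq A y y).re)]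
  · -- case sin α > 0
    set c : ℂ := (s : ℂ) + (t : ℂ) * Complex.I with hc
    set cb : ℂ := (s : ℂ) - (t : ℂ) * Complex.I with hcb
    have hconj : starRingEnd ℂ c = cb := by
      rw [hc, hcb]
      simp [Complex.ext_iff]
    have hconj' : starRingEnd ℂ cb = c := by
      rw [hc, hcb]
      simp [Complex.ext_iff]
    have habsc : ‖c‖ = 1 := by
      have : Complex.normSq c = 1 := by
        rw [hc]
        simp [Complex.normSq_apply]
        nlinarith
      rw [← Complex.sq_norm] at this
      nlinarith [norm_nonneg c]
    have habscb : ‖cb‖ = 1 := by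
      rw [← hconj] at *
      rw [Complex.norm_conj]
      exact habsc
    set Hp : Matrix m m ℂ := (1 / 2 : ℂ) • (c • A + cb • Aᴴ) with hHp
    set Hm : Matrix m m ℂ := (1 / 2 : ℂ) • (cb • A + c • Aᴴ) with hHm
    have hHpherm : Hp.IsHermitian := by
      unfold Hp
      unfold Matrix.IsHermitian
      rw [Matrix.conjTranspose_smul, Matrix.conjTranspose_add, Matrix.conjTranspose_smul,
        Matrix.conjTranspose_smul, Matrix.conjTranspose_conjTranspose]
      rw [show star (1 / 2 : ℂ) = (1 / 2 : ℂ) by simp]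
      rw [show star c = cb from hconj, show star cb = c from hconj']
      rw [add_comm]
    have hHmherm : Hm.IsHermitian := by
      unfold Hm
      unfold Matrix.IsHermitian
      rw [Matrix.conjTranspose_smul, Matrix.conjTranspose_add, Matrix.conjTranspose_smul,
        Matrix.conjTranspose_smul, Matrix.conjTranspose_conjTranspose]
      rw [show star (1 / 2 : ℂ) = (1 / 2 : ℂ) by simp]
      rw [show star c = cb from hconj, show star cb = c from hconj']
      rw [add_comm]
    have hsqHp : ∀ v w : m → ℂ, sq Hp v w = (1 / 2 : ℂ) * (c * sq A v w + cb * sq Aᴴ v w) := by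
      intro v w; rw [hHp, sq_smul, sq_add, sq_smul, sq_smul]
    have hsqHm : ∀ v w : m → ℂ, sq Hm v w = (1 / 2 : ℂ) * (cb * sq A v w + c * sq Aᴴ v w) := by
      intro v w; rw [hHm, sq_smul, sq_add, sq_smul, sq_smul]
    have hre_c : ∀ q : ℂ, ((1 / 2 : ℂ) * (c * q + cb * starRingEnd ℂ q)).re
        = s * q.re - t * q.im := by
      intro q
      rw [hc, hcb]
      simp [Complex.add_re, Complex.mul_re, Complex.mul_im, Complex.conj_re, Complex.conj_im,
        Complex.div_re]
      ring
    have hre_cb : ∀ q : ℂ, ((1 / 2 : ℂ) * (cb * q + c * starRingEnd ℂ q)).re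
        = s * q.re + t * q.im := by
      intro q
      rw [hc, hcb]
      simp [Complex.add_re, Complex.mul_re, Complex.mul_im, Complex.conj_re, Complex.conj_im,
        Complex.div_re]
      ring
    have hHpre : ∀ v : m → ℂ, (sq Hp v v).re = s * (sq A v v).re - t * (sq A v v).im := by
      intro v; rw [hsqHp, sq_conjTranspose]; exact hre_c _
    have hHmre : ∀ v : m → ℂ, (sq Hm v v).re = s * (sq A v v).re + t * (sq A v v).im := by
      intro v; rw [hsqHm, sq_conjTranspose]; exact hre_cb _
    have hHppsd : Hp.PosSemidef := (posSemidef_iff_re hHpherm).mpr fun v => by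
      rw [hHpre]
      have := hsec' v
      have h3 : t * (sq A v v).im ≤ t * |(sq A v v).im| :=
        mul_le_mul_of_nonneg_left (le_abs_self _) ht.le
      linarith [hsec' v]
    have hHmpsd : Hm.PosSemidef := (posSemidef_iff_re hHmherm).mpr fun v => by
      rw [hHmre]
      have h3 : t * (-(sq A v v).im) ≤ t * |(sq A v v).im| :=
        mul_le_mul_of_nonneg_left (neg_le_abs _) ht.le
      linarith [hsec' v]
    -- recover sq A x y from the two Hermitian forms
    have hm_id : ((2 * (s * t) : ℝ) : ℂ) * Complex.I * sq A x y
        = c * sq Hp x y - cb * sq Hm x y := by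
      rw [hsqHp, hsqHm, hc, hcb]
      push_cast
      ring
    have habs_m : 2 * (s * t) * ‖(sq A x y)‖
        ≤ ‖(sq Hp x y)‖ + ‖(sq Hm x y)‖ := by
      have h1 : ‖(((2 * (s * t) : ℝ) : ℂ) * Complex.I * sq A x y)‖
          = 2 * (s * t) * ‖(sq A x y)‖ := by
        rw [norm_mul, norm_mul, Complex.norm_real, Real.norm_eq_abs, Complex.norm_I]
        rw [_root_.abs_of_nonneg (by positivity : (0:ℝ) ≤ 2 * (s * t))]
        ring
      rw [← h1, hm_id]
      calc ‖(c * sq Hp x y - cb * sq Hm x y)‖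
          ≤ ‖(c * sq Hp x y)‖ + ‖(cb * sq Hm x y)‖ := by
            exact norm_sub_le _ _
        _ = ‖(sq Hp x y)‖ + ‖(sq Hm x y)‖ := by
            rw [norm_mul, norm_mul, habsc, habscb, one_mul, one_mul]
    have hcsp := cauchy_schwarz hHppsd x y
    have hcsm := cauchy_schwarz hHmpsd x y
    set px := (sq A x x).re
    set py := (sq A y y).re
    set ix := (sq A x x).im
    set iy := (sq A y y).im
    have hsum : Real.sqrt ((sq Hp x x).re * (sq Hp y y).re)
        + Real.sqrt ((sq Hm x x).re * (sq Hm y y).re)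
        ≤ Real.sqrt ((2 * (s * px)) * (2 * (s * py))) := by
      have h1 := hHpre x
      have h2 := hHpre y
      have h3 := hHmre x
      have h4 := hHmre y
      have hp1 : 0 ≤ (sq Hp x x).re := ((posSemidef_iff_re hHpherm).mp hHppsd) x
      have hp2 : 0 ≤ (sq Hp y y).re := ((posSemidef_iff_re hHpherm).mp hHppsd) y
      have hp3 : 0 ≤ (sq Hm x x).re := ((posSemidef_iff_re hHmherm).mp hHmpsd) x
      have hp4 : 0 ≤ (sq Hm y y).re := ((posSemidef_iff_re hHmherm).mp hHmpsd) y
      have key := sqrt_add_sqrt_le hp1 hp3 hp2 hp4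
      have e1 : (sq Hp x x).re + (sq Hm x x).re = 2 * (s * px) := by
        rw [h1, h3]; unfold px; ring
      have e2 : (sq Hp y y).re + (sq Hm y y).re = 2 * (s * py) := by
        rw [h2, h4]; unfold py; ring
      rw [e1, e2] at key
      exact key
    have hsqrt_eq : Real.sqrt ((2 * (s * px)) * (2 * (s * py)))
        = 2 * s * Real.sqrt (px * py) := by
      have hpx : 0 ≤ px := (hsec x).1
      have hpy : 0 ≤ py := (hsec y).1
      rw [show (2 * (s * px)) * (2 * (s * py)) = (2 * s) ^ 2 * (px * py) by ring]
      rw [Real.sqrt_mul (by positivity), Real.sqrt_sq (by positivity)]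
    have hfinal : 2 * (s * t) * ‖(sq A x y)‖ ≤ 2 * s * Real.sqrt (px * py) := by
      calc 2 * (s * t) * ‖(sq A x y)‖
          ≤ ‖(sq Hp x y)‖ + ‖(sq Hm x y)‖ := habs_m
        _ ≤ Real.sqrt ((sq Hp x x).re * (sq Hp y y).re)
            + Real.sqrt ((sq Hm x x).re * (sq Hm y y).re) := add_le_add hcsp hcsm
        _ ≤ Real.sqrt ((2 * (s * px)) * (2 * (s * py))) := hsum
        _ = 2 * s * Real.sqrt (px * py) := hsqrt_eq
    have h2s : 0 < 2 * s := by linarith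
    calc ‖(sq A x y)‖
        = (2 * (s * t))⁻¹ * (2 * (s * t) * ‖(sq A x y)‖) := by
          field_simp
      _ ≤ (2 * (s * t))⁻¹ * (2 * s * Real.sqrt (px * py)) := by
          apply mul_le_mul_of_nonneg_left hfinal (by positivity)
      _ = t⁻¹ * Real.sqrt (px * py) := by
          field_simp

/-! ### block matrices -/

def blkM (H M : Matrix m m ℂ) : Matrix (m ⊕ m) (m ⊕ m) ℂ := Matrix.fromBlocks H M Mᴴ H

lemma blkM_herm {H : Matrix m m ℂ} (M : Matrix m m ℂ) (hH : H.IsHermitian) :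
    (blkM H M).IsHermitian := by
  unfold blkM Matrix.IsHermitian
  rw [Matrix.fromBlocks_conjTranspose, Matrix.conjTranspose_conjTranspose, hH.eq]

lemma sq_blkM (H M : Matrix m m ℂ) (x y : m → ℂ) :
    sq (blkM H M) (Sum.elim x y) (Sum.elim x y)
      = sq H x x + sq H y y + (sq M x y + sq Mᴴ y x) := by
  unfold sq blkM
  rw [Matrix.fromBlocks_mulVec, Function.star_sumElim, sumElim_dotProduct_sumElim,
    dotProduct_add, dotProduct_add]
  simp only [Sum.elim_comp_inl, Sum.elim_comp_inr]
  ring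

lemma blkM_posSemidef {H M : Matrix m m ℂ} (hH : H.IsHermitian)
    (h : ∀ x y : m → ℂ, 2 * ‖(sq M x y)‖ ≤ (sq H x x).re + (sq H y y).re) :
    (blkM H M).PosSemidef := by
  refine (posSemidef_iff_re (blkM_herm M hH)).mpr fun v => ?_
  have hv : Sum.elim (v ∘ Sum.inl) (v ∘ Sum.inr) = v := Sum.elim_comp_inl_inr v
  rw [← hv, sq_blkM]
  set x := v ∘ Sum.inl
  set y := v ∘ Sum.inr
  rw [show sq Mᴴ y x = starRingEnd ℂ (sq M x y) from sq_conjTranspose M y x,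
    Complex.add_conj]
  simp only [Complex.add_re, Complex.ofReal_re]
  have h1 := h x y
  have h2 : -(‖(sq M x y)‖) ≤ (sq M x y).re :=
    (abs_le.mp (Complex.abs_re_le_norm _)).1
  linarith

lemma blkM_extract {H C : Matrix m m ℂ} (hpsd : (blkM H C).PosSemidef) (x : m → ℂ) :
    ‖(sq C x x)‖ ≤ (sq H x x).re := by
  set b := sq C x x with hbdef
  obtain ⟨u, hu, hub⟩ : ∃ u : ℂ, ‖u‖ = 1 ∧ u * b = -((‖b‖ : ℝ) : ℂ) := by
    by_cases h0 : b = 0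
    · exact ⟨1, by simp [h0]⟩
    · have habs : (‖b‖ : ℝ) ≠ 0 := by simpa using h0
      refine ⟨-(starRingEnd ℂ b) / ‖b‖, ?_, ?_⟩
      · simp [map_div₀, h0]
      · rw [div_mul_eq_mul_div, neg_mul, mul_comm, Complex.mul_conj]
        rw [show (Complex.normSq b : ℂ) = (‖b‖ : ℂ) ^ 2 by
          rw [← Complex.sq_norm]; push_cast; ring]
        field_simp
  have huu : starRingEnd ℂ u * u = 1 := by
    have h1 := Complex.mul_conj u
    rw [mul_comm] at h1
    rw [h1, Complex.normSq_eq_norm_sq, hu]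
    simp
  have h0 : 0 ≤ (sq (blkM H C) (Sum.elim x (u • x)) (Sum.elim x (u • x))).re := by
    have := hpsd.dotProduct_mulVec_nonneg (Sum.elim x (u • x))
    exact (Complex.nonneg_iff.mp this).1
  rw [sq_blkM] at h0
  have e1 : sq H (u • x) (u • x) = sq H x x := by
    rw [sq_smul_left, sq_smul_right, ← mul_assoc, huu, one_mul]
  have e2 : sq C x (u • x) = -((‖b‖ : ℝ) : ℂ) := by
    rw [sq_smul_right, ← hbdef, hub]
  have e3 : sq Cᴴ (u • x) x = -((‖b‖ : ℝ) : ℂ) := by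
    rw [show sq Cᴴ (u • x) x = starRingEnd ℂ (sq C x (u • x)) from sq_conjTranspose C (u • x) x,
      e2]
    simp
  rw [e1, e2, e3] at h0
  simp only [Complex.add_re, Complex.neg_re, Complex.ofReal_re] at h0
  linarith

lemma blkM_hadamard (H₁ M₁ H₂ M₂ : Matrix m m ℂ) :
    blkM H₁ M₁ ⊙ blkM H₂ M₂ = blkM (H₁ ⊙ H₂) (M₁ ⊙ M₂) := by
  unfold blkM
  ext i j
  cases i <;> cases j <;>
    simp [Matrix.hadamard_apply, Matrix.fromBlocks, Matrix.conjTranspose_apply, star_mul',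
      mul_comm]

/-! ### Hermitian real part -/

lemma reP_herm (A : Matrix m m ℂ) : ((1 / 2 : ℂ) • (A + Aᴴ)).IsHermitian := by
  unfold Matrix.IsHermitian
  rw [Matrix.conjTranspose_smul, Matrix.conjTranspose_add, Matrix.conjTranspose_conjTranspose]
  rw [show star (1 / 2 : ℂ) = (1 / 2 : ℂ) by simp]
  rw [add_comm]

lemma reP_sq (A : Matrix m m ℂ) (x : m → ℂ) :
    sq ((1 / 2 : ℂ) • (A + Aᴴ)) x x = (((sq A x x).re : ℝ) : ℂ) := by
  rw [sq_smul, sq_add, sq_conjTranspose, Complex.add_conj]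
  push_cast
  ring

lemma reP_psd {A : Matrix m m ℂ} (hre : ∀ x : m → ℂ, 0 ≤ (sq A x x).re) :
    ((1 / 2 : ℂ) • (A + Aᴴ)).PosSemidef :=
  (posSemidef_iff_re (reP_herm A)).mpr fun x => by
    rw [reP_sq]
    simpa using hre x

/-! ### glue lemmas at Fin n level -/

variable {n : ℕ}

lemma nsq_eq_zero {x : Fin n → ℂ} (hx : nsq x = 0) : x = 0 := by
  funext i
  have h : Complex.normSq (x i) = 0 := by
    have := Finset.sum_eq_zero_iff_of_nonneg
      (fun i (_ : i ∈ Finset.univ) => Complex.normSq_nonneg (x i))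
    exact (this.mp hx) i (Finset.mem_univ i)
  simpa using Complex.normSq_eq_zero.mp h

lemma sq_zero (M : Matrix (Fin n) (Fin n) ℂ) : sq M 0 0 = 0 := by
  simp [sq]

lemma sector_form {α : ℝ} {A : Matrix (Fin n) (Fin n) ℂ} (h : numRange A ⊆ sector α) :
    ∀ x : Fin n → ℂ, 0 ≤ (sq A x x).re ∧ |(sq A x x).im| ≤ Real.tan α * (sq A x x).re := by
  intro x
  by_cases hx : nsq x = 0
  · rw [nsq_eq_zero hx, sq_zero]
    simp
  · have hpos : 0 < nsq x := lt_of_le_of_ne (nsq_nonneg x) (Ne.symm hx)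
    set r : ℝ := Real.sqrt (nsq x) with hr
    have hrpos : 0 < r := Real.sqrt_pos.mpr hpos
    have hr2 : r ^ 2 = nsq x := Real.sq_sqrt hpos.le
    have h1 : nsq (((r⁻¹ : ℝ) : ℂ) • x) = 1 := by
      rw [nsq_smul_real, ← hr2]
      field_simp
    have hmem : sq A (((r⁻¹ : ℝ) : ℂ) • x) (((r⁻¹ : ℝ) : ℂ) • x) ∈ numRange A :=
      mem_numRange_iff.mpr ⟨_, h1, rfl⟩
    have hsect := h hmem
    obtain ⟨hre, him⟩ := hsect
    rw [sq_smul_real] at hre him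
    rw [Complex.re_ofReal_mul] at hre
    rw [Complex.re_ofReal_mul, Complex.im_ofReal_mul] at him
    have hr2pos : (0:ℝ) < r⁻¹ ^ 2 := by positivity
    constructor
    · nlinarith
    · rw [abs_mul, _root_.abs_of_nonneg hr2pos.le] at him
      have h2 : r⁻¹ ^ 2 * |(sq A x x).im| ≤ r⁻¹ ^ 2 * (Real.tan α * (sq A x x).re) := by
        calc r⁻¹ ^ 2 * |(sq A x x).im| ≤ Real.tan α * (r⁻¹ ^ 2 * (sq A x x).re) := him
          _ = r⁻¹ ^ 2 * (Real.tan α * (sq A x x).re) := by ring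
      have h3 := mul_le_mul_of_nonneg_left h2 (le_of_lt (by positivity : (0:ℝ) < r ^ 2))
      rw [← mul_assoc, ← mul_assoc] at h3
      have h4 : r ^ 2 * r⁻¹ ^ 2 = 1 := by field_simp
      rw [h4, one_mul, one_mul] at h3
      exact h3

lemma numRadius_smul_unit {c : ℂ} (hc : ‖c‖ = 1) (M : Matrix (Fin n) (Fin n) ℂ) :
    numRadius (c • M) = numRadius M := by
  unfold numRadius
  congr 1
  ext a
  simp only [Set.mem_image]
  constructor
  · rintro ⟨v, hv, rfl⟩
    obtain ⟨x, hx, rfl⟩ := mem_numRange_iff.mp hv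
    refine ⟨sq M x x, mem_numRange_iff.mpr ⟨x, hx, rfl⟩, ?_⟩
    rw [show sq (c • M) x x = c * sq M x x from sq_smul c M x x, norm_mul, hc, one_mul]
  · rintro ⟨v, hv, rfl⟩
    obtain ⟨x, hx, rfl⟩ := mem_numRange_iff.mp hv
    refine ⟨sq (c • M) x x, mem_numRange_iff.mpr ⟨x, hx, rfl⟩, ?_⟩
    rw [show sq (c • M) x x = c * sq M x x from sq_smul c M x x, norm_mul, hc, one_mul]

lemma radius_reP_le (A : Matrix (Fin n) (Fin n) ℂ) :
    numRadius ((1 / 2 : ℂ) • (A + Aᴴ)) ≤ numRadius A := by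
  apply Real.sSup_le
  · rintro a ⟨v, hv, rfl⟩
    obtain ⟨x, hx, rfl⟩ := mem_numRange_iff.mp hv
    beta_reduce
    rw [reP_sq, Complex.norm_real, Real.norm_eq_abs]
    exact le_trans (Complex.abs_re_le_norm _) (abs_sq_le_radius hx)
  · exact numRadius_nonneg A

lemma sq_one (x : Fin n → ℂ) : sq (1 : Matrix (Fin n) (Fin n) ℂ) x x = ((nsq x : ℝ) : ℂ) := by
  have h : ∀ z : ℂ, starRingEnd ℂ z * z = ((Complex.normSq z : ℝ) : ℂ) := fun z => by
    rw [mul_comm, Complex.mul_conj]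
  unfold sq nsq
  rw [Matrix.one_mulVec]
  push_cast
  simp only [dotProduct, Pi.star_apply, Complex.star_def, h]

lemma nsq_single (i : Fin n) : nsq (Pi.single i 1) = 1 := by
  unfold nsq
  rw [Finset.sum_eq_single i]
  · simp
  · intro j _ hj
    simp [Pi.single_apply, hj]
  · intro hi
    exact absurd (Finset.mem_univ i) hi

lemma sq_single (Q : Matrix (Fin n) (Fin n) ℂ) (i : Fin n) :
    sq Q (Pi.single i 1) (Pi.single i 1) = Q i i := by
  unfold sq
  rw [dot_expand]
  rw [Finset.sum_eq_single i]
  · rw [Finset.sum_eq_single i]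
    · simp
    · intro j _ hj
      simp [Pi.single_apply, hj]
    · intro hi
      exact absurd (Finset.mem_univ i) hi
  · intro j _ hj
    apply Finset.sum_eq_zero
    intro k _
    simp [Pi.single_apply, hj]
  · intro hi
    exact absurd (Finset.mem_univ i) hi

lemma hadamard_re_bound {P Q : Matrix (Fin n) (Fin n) ℂ} (hP : P.PosSemidef)
    (hQ : Q.PosSemidef) {x : Fin n → ℂ} (hx : nsq x = 1) :
    (sq (P ⊙ Q) x x).re ≤ numRadius P * numRadius Q := by
  set ω : ℝ := numRadius P with hω
  have hω0 : 0 ≤ ω := numRadius_nonneg P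
  -- D = ω•1 - P is PSD
  have hDherm : (((ω : ℝ) : ℂ) • (1 : Matrix (Fin n) (Fin n) ℂ) - P).IsHermitian := by
    unfold Matrix.IsHermitian
    rw [Matrix.conjTranspose_sub, Matrix.conjTranspose_smul, Matrix.conjTranspose_one, hP.1.eq]
    congr 1
    rw [Complex.star_def, Complex.conj_ofReal]
  have hDpsd : (((ω : ℝ) : ℂ) • (1 : Matrix (Fin n) (Fin n) ℂ) - P).PosSemidef := by
    refine (posSemidef_iff_re hDherm).mpr fun y => ?_
    rw [sq_sub, sq_smul, sq_one]
    have h1 : (sq P y y).re ≤ ω * nsq y := by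
      calc (sq P y y).re ≤ ‖(sq P y y)‖ := Complex.re_le_norm _
        _ ≤ ω * nsq y := abs_sq_le_radius' P y
    have h2 : (((ω : ℝ) : ℂ) * ((nsq y : ℝ) : ℂ)).re = ω * nsq y := by
      push_cast
      simp
    simp only [Complex.sub_re, h2]
    linarith
  have hDQ := posSemidef_hadamard hDpsd hQ
  have hexp : ((((ω : ℝ) : ℂ) • (1 : Matrix (Fin n) (Fin n) ℂ) - P) ⊙ Q)
      = ((ω : ℝ) : ℂ) • ((1 : Matrix (Fin n) (Fin n) ℂ) ⊙ Q) - P ⊙ Q := by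
    ext i j
    simp only [Matrix.hadamard_apply, Matrix.sub_apply, Matrix.smul_apply, smul_eq_mul]
    ring
  have h0 : 0 ≤ (sq (((ω : ℝ) : ℂ) • ((1 : Matrix (Fin n) (Fin n) ℂ) ⊙ Q) - P ⊙ Q) x x).re := by
    rw [← hexp]
    exact ((posSemidef_iff_re hDQ.1).mp hDQ) x
  rw [sq_sub, sq_smul, Complex.sub_re, Complex.re_ofReal_mul] at h0
  -- bound the diagonal part
  have hdiag : (sq ((1 : Matrix (Fin n) (Fin n) ℂ) ⊙ Q) x x).re ≤ numRadius Q := by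
    rw [Matrix.one_hadamard]
    have hsqd : sq (Matrix.diagonal fun i => Q i i) x x
        = ∑ i, Q i i * ((Complex.normSq (x i) : ℝ) : ℂ) := by
      unfold sq
      rw [dot_expand]
      refine Finset.sum_congr rfl fun i _ => ?_
      rw [Finset.sum_eq_single i]
      · rw [Matrix.diagonal_apply_eq]
        rw [show star (x i) * Q i i * x i = Q i i * (star (x i) * x i) by ring]
        rw [show star (x i) * x i = ((Complex.normSq (x i) : ℝ) : ℂ) by
          rw [Complex.star_def, mul_comm, Complex.mul_conj]]
      · intro j _ hj
        rw [Matrix.diagonal_apply_ne _ (Ne.symm hj)]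
        ring
      · intro hi
        exact absurd (Finset.mem_univ i) hi
    rw [show Q.diag = fun i => Q i i from rfl, hsqd]
    rw [Complex.re_sum]
    have hterm : ∀ i : Fin n, (Q i i * ((Complex.normSq (x i) : ℝ) : ℂ)).re
        ≤ numRadius Q * Complex.normSq (x i) := by
      intro i
      have hre : (Q i i * ((Complex.normSq (x i) : ℝ) : ℂ)).re
          = (Q i i).re * Complex.normSq (x i) := by
        rw [mul_comm, Complex.re_ofReal_mul]
        ring
      rw [hre]
      have h1 : (Q i i).re ≤ numRadius Q := by
        have := abs_sq_le_radius (M := Q) (nsq_single i)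
        rw [sq_single] at this
        exact le_trans (Complex.re_le_norm _) this
      exact mul_le_mul_of_nonneg_right h1 (Complex.normSq_nonneg _)
    calc ∑ i, (Q i i * ((Complex.normSq (x i) : ℝ) : ℂ)).re
        ≤ ∑ i, numRadius Q * Complex.normSq (x i) := Finset.sum_le_sum fun i _ => hterm i
      _ = numRadius Q * nsq x := by rw [← Finset.mul_sum]; rfl
      _ = numRadius Q := by rw [hx, mul_one]
  calc (sq (P ⊙ Q) x x).re ≤ ω * (sq ((1 : Matrix (Fin n) (Fin n) ℂ) ⊙ Q) x x).re := by
        linarith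
    _ ≤ ω * numRadius Q := mul_le_mul_of_nonneg_left hdiag hω0

lemma herm_smul_real {H : Matrix m m ℂ} (h : H.IsHermitian) (r : ℝ) :
    (((r : ℝ) : ℂ) • H).IsHermitian := by
  unfold Matrix.IsHermitian
  rw [Matrix.conjTranspose_smul, h.eq]
  congr 1
  rw [Complex.star_def, Complex.conj_ofReal]

end NRaux

theorem numRadius_hadamard_le_sec_sec' {n : ℕ} (X Y : Matrix (Fin n) (Fin n) ℂ)
    (α₁ α₂ : ℝ) (hα₁ : α₁ ∈ Set.Ico 0 (Real.pi / 2)) (hα₂ : α₂ ∈ Set.Ico 0 (Real.pi / 2))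
    (z w : ℂ) (hz : ‖z‖ = 1) (hw : ‖w‖ = 1)
    (hX : numRange (z • X) ⊆ sector α₁) (hY : numRange (w • Y) ⊆ sector α₂) :
    numRadius (X ⊙ Y) ≤ (Real.cos α₁)⁻¹ * (Real.cos α₂)⁻¹ * numRadius X * numRadius Y := by
  open NRaux in
  have ht1 : 0 < Real.cos α₁ :=
    Real.cos_pos_of_mem_Ioo ⟨by linarith [Real.pi_pos, hα₁.1], hα₁.2⟩
  have ht2 : 0 < Real.cos α₂ :=
    Real.cos_pos_of_mem_Ioo ⟨by linarith [Real.pi_pos, hα₂.1], hα₂.2⟩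
  set t1 : ℝ := (Real.cos α₁)⁻¹ with ht1d
  set t2 : ℝ := (Real.cos α₂)⁻¹ with ht2d
  have ht1n : 0 ≤ t1 := by positivity
  have ht2n : 0 ≤ t2 := by positivity
  set A := z • X with hA
  set B := w • Y with hB
  have hsecA := NRaux.sector_form hX
  have hsecB := NRaux.sector_form hY
  set RA : Matrix (Fin n) (Fin n) ℂ := (1 / 2 : ℂ) • (A + Aᴴ) with hRA
  set RB : Matrix (Fin n) (Fin n) ℂ := (1 / 2 : ℂ) • (B + Bᴴ) with hRB
  have hRApsd : RA.PosSemidef := NRaux.reP_psd fun x => (hsecA x).1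
  have hRBpsd : RB.PosSemidef := NRaux.reP_psd fun x => (hsecB x).1
  set HA : Matrix (Fin n) (Fin n) ℂ := ((t1 : ℝ) : ℂ) • RA with hHA
  set HB : Matrix (Fin n) (Fin n) ℂ := ((t2 : ℝ) : ℂ) • RB with hHB
  have hHAre : ∀ x : Fin n → ℂ, (NRaux.sq HA x x).re = t1 * (NRaux.sq A x x).re := by
    intro x
    rw [hHA, NRaux.sq_smul, Complex.re_ofReal_mul, hRA, NRaux.reP_sq, Complex.ofReal_re]
  have hHBre : ∀ x : Fin n → ℂ, (NRaux.sq HB x x).re = t2 * (NRaux.sq B x x).re := by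
    intro x
    rw [hHB, NRaux.sq_smul, Complex.re_ofReal_mul, hRB, NRaux.reP_sq, Complex.ofReal_re]
  have hblkA : (NRaux.blkM HA A).PosSemidef := by
    refine NRaux.blkM_posSemidef (NRaux.herm_smul_real (NRaux.reP_herm A) t1) fun x y => ?_
    have hcs := NRaux.sector_cs hα₁ hsecA x y
    have hpx : 0 ≤ (NRaux.sq A x x).re := (hsecA x).1
    have hpy : 0 ≤ (NRaux.sq A y y).re := (hsecA y).1
    have h2s := NRaux.two_sqrt_le hpx hpy
    rw [hHAre, hHAre]
    have h3 : 2 * ‖(NRaux.sq A x y)‖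
        ≤ t1 * (2 * Real.sqrt ((NRaux.sq A x x).re * (NRaux.sq A y y).re)) := by
      rw [← ht1d] at hcs
      nlinarith [Real.sqrt_nonneg ((NRaux.sq A x x).re * (NRaux.sq A y y).re)]
    calc 2 * ‖(NRaux.sq A x y)‖
        ≤ t1 * (2 * Real.sqrt ((NRaux.sq A x x).re * (NRaux.sq A y y).re)) := h3
      _ ≤ t1 * ((NRaux.sq A x x).re + (NRaux.sq A y y).re) :=
          mul_le_mul_of_nonneg_left h2s ht1n
      _ = t1 * (NRaux.sq A x x).re + t1 * (NRaux.sq A y y).re := by ring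
  have hblkB : (NRaux.blkM HB B).PosSemidef := by
    refine NRaux.blkM_posSemidef (NRaux.herm_smul_real (NRaux.reP_herm B) t2) fun x y => ?_
    have hcs := NRaux.sector_cs hα₂ hsecB x y
    have hpx : 0 ≤ (NRaux.sq B x x).re := (hsecB x).1
    have hpy : 0 ≤ (NRaux.sq B y y).re := (hsecB y).1
    have h2s := NRaux.two_sqrt_le hpx hpy
    rw [hHBre, hHBre]
    have h3 : 2 * ‖(NRaux.sq B x y)‖
        ≤ t2 * (2 * Real.sqrt ((NRaux.sq B x x).re * (NRaux.sq B y y).re)) := by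
      rw [← ht2d] at hcs
      nlinarith [Real.sqrt_nonneg ((NRaux.sq B x x).re * (NRaux.sq B y y).re)]
    calc 2 * ‖(NRaux.sq B x y)‖
        ≤ t2 * (2 * Real.sqrt ((NRaux.sq B x x).re * (NRaux.sq B y y).re)) := h3
      _ ≤ t2 * ((NRaux.sq B x x).re + (NRaux.sq B y y).re) :=
          mul_le_mul_of_nonneg_left h2s ht2n
      _ = t2 * (NRaux.sq B x x).re + t2 * (NRaux.sq B y y).re := by ring
  have hblk := NRaux.posSemidef_hadamard hblkA hblkB
  rw [NRaux.blkM_hadamard] at hblk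
  have hHH : HA ⊙ HB = ((t1 * t2 : ℝ) : ℂ) • (RA ⊙ RB) := by
    rw [hHA, hHB, Matrix.smul_hadamard, Matrix.hadamard_smul, smul_smul]
    congr 1
    push_cast
    ring
  rw [hHH] at hblk
  have hωRA : numRadius RA ≤ numRadius X :=
    le_trans (NRaux.radius_reP_le A) (le_of_eq (NRaux.numRadius_smul_unit hz X))
  have hωRB : numRadius RB ≤ numRadius Y :=
    le_trans (NRaux.radius_reP_le B) (le_of_eq (NRaux.numRadius_smul_unit hw Y))
  have hωX : 0 ≤ numRadius X := NRaux.numRadius_nonneg X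
  have hωY : 0 ≤ numRadius Y := NRaux.numRadius_nonneg Y
  have hRHS : 0 ≤ t1 * t2 * numRadius X * numRadius Y := by positivity
  unfold numRadius
  apply Real.sSup_le _ hRHS
  rintro a ⟨v, hv, rfl⟩
  obtain ⟨x, hx, rfl⟩ := NRaux.mem_numRange_iff.mp hv
  have hAB : A ⊙ B = (z * w) • (X ⊙ Y) := by
    rw [hA, hB, Matrix.smul_hadamard, Matrix.hadamard_smul, smul_smul]
  have habs_eq : ‖(NRaux.sq (X ⊙ Y) x x)‖ = ‖(NRaux.sq (A ⊙ B) x x)‖ := by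
    rw [hAB, NRaux.sq_smul, norm_mul, norm_mul, hz, hw, one_mul, one_mul]
  have hext := NRaux.blkM_extract hblk x
  rw [NRaux.sq_smul, Complex.re_ofReal_mul] at hext
  have hbound := NRaux.hadamard_re_bound hRApsd hRBpsd hx
  have hprod : numRadius RA * numRadius RB ≤ numRadius X * numRadius Y :=
    mul_le_mul hωRA hωRB (NRaux.numRadius_nonneg RB) hωX
  calc ‖(NRaux.sq (X ⊙ Y) x x)‖
      = ‖(NRaux.sq (A ⊙ B) x x)‖ := habs_eq
    _ ≤ t1 * t2 * (NRaux.sq (RA ⊙ RB) x x).re := hext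
    _ ≤ t1 * t2 * (numRadius RA * numRadius RB) := by
        apply mul_le_mul_of_nonneg_left hbound (by positivity)
    _ ≤ t1 * t2 * (numRadius X * numRadius Y) := by
        apply mul_le_mul_of_nonneg_left hprod (by positivity)
    _ = t1 * t2 * numRadius X * numRadius Y := by ring

theorem numRadius_hadamard_le_sec_sec {n : ℕ} (X Y : Matrix (Fin n) (Fin n) ℂ)
    (α₁ α₂ : ℝ) (hα₁ : α₁ ∈ Set.Ico 0 (Real.pi / 2)) (hα₂ : α₂ ∈ Set.Ico 0 (Real.pi / 2))
    (z w : ℂ) (hz : ‖z‖ = 1) (hw : ‖w‖ = 1)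
    (hX : numRange (z • X) ⊆ sector α₁) (hY : numRange (w • Y) ⊆ sector α₂) :
    numRadius (X ⊙ Y) ≤ (Real.cos α₁)⁻¹ * (Real.cos α₂)⁻¹ * numRadius X * numRadius Y :=
  numRadius_hadamard_le_sec_sec' X Y α₁ α₂ hα₁ hα₂ z w hz hw hX hY
end

section
/- Let X ∈ M_n(ℂ) with W(X) ⊂ S_{α₁} and Y ∈ M_n(ℂ) with W(Y) ⊂ S_{α₂}, α₁, α₂ ∈ [0, π/2). Then ω(X ∘ Y) ≤ min{ (1 + tan α₁) ω(Re X) ω(Y), (1 + tan α₂) ω(X) ω(Re Y) }. -/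
open Matrix Complex
open scoped ComplexOrder

namespace NRaux
variable {m : ℕ}

noncomputable def q (M : Matrix (Fin m) (Fin m) ℂ) (x : Fin m → ℂ) : ℂ :=
  star x ⬝ᵥ M.mulVec x

lemma q_eq (M : Matrix (Fin m) (Fin m) ℂ) (x : Fin m → ℂ) :
    q M x = ∑ i, ∑ j, (starRingEnd ℂ) (x i) * (M i j * x j) := by
  simp [q, dotProduct, mulVec, Finset.mul_sum]

noncomputable def ns (x : Fin m → ℂ) : ℝ := ∑ i, ‖x i‖ ^ 2

lemma ns_nonneg (x : Fin m → ℂ) : 0 ≤ ns x :=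
  Finset.sum_nonneg fun _ _ => sq_nonneg _

lemma norm_sq_eq (x : EuclideanSpace ℂ (Fin m)) : ‖x‖ ^ 2 = ns (x : Fin m → ℂ) := by
  rw [EuclideanSpace.norm_eq, Real.sq_sqrt]
  · rfl
  · exact Finset.sum_nonneg fun _ _ => sq_nonneg _

lemma ns_unit (x : EuclideanSpace ℂ (Fin m)) (hx : ‖x‖ = 1) : ns (x : Fin m → ℂ) = 1 := by
  rw [← norm_sq_eq, hx]; norm_num

lemma coord_le_one (x : EuclideanSpace ℂ (Fin m)) (hx : ‖x‖ = 1) (i : Fin m) :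
    ‖(x : Fin m → ℂ) i‖ ≤ 1 := by
  have h := ns_unit x hx
  have h2 : ‖(x : Fin m → ℂ) i‖ ^ 2 ≤ 1 := by
    rw [← h]
    exact Finset.single_le_sum (f := fun j => ‖(x : Fin m → ℂ) j‖ ^ 2)
      (fun _ _ => sq_nonneg _) (Finset.mem_univ i)
  nlinarith [norm_nonneg ((x : Fin m → ℂ) i)]

lemma bdd (M : Matrix (Fin m) (Fin m) ℂ) : BddAbove ((fun z : ℂ => ‖z‖) '' numRange M) := by
  refine ⟨∑ i, ∑ j, ‖M i j‖, ?_⟩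
  rintro r ⟨z, ⟨x, hx, rfl⟩, rfl⟩
  have hz : star (x : Fin m → ℂ) ⬝ᵥ M.mulVec x = q M (x : Fin m → ℂ) := rfl
  rw [hz, q_eq]
  refine le_trans (norm_sum_le _ _) ?_
  refine Finset.sum_le_sum fun i _ => ?_
  refine le_trans (norm_sum_le _ _) ?_
  refine Finset.sum_le_sum fun j _ => ?_
  have : ‖(starRingEnd ℂ) ((x : Fin m → ℂ) i) * (M i j * (x : Fin m → ℂ) j)‖
      = ‖(x : Fin m → ℂ) i‖ * (‖M i j‖ * ‖(x : Fin m → ℂ) j‖) := by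
    rw [norm_mul, norm_mul, Complex.norm_conj]
  rw [this]
  have h1 := coord_le_one x hx i
  have h2 := coord_le_one x hx j
  have hb := norm_nonneg (M i j)
  have e1 : ‖M i j‖ * ‖(x : Fin m → ℂ) j‖ ≤ ‖M i j‖ :=
    mul_le_of_le_one_right hb h2
  refine le_trans (mul_le_of_le_one_left ?_ h1) e1
  exact mul_nonneg hb (norm_nonneg _)

lemma le_radius (M : Matrix (Fin m) (Fin m) ℂ) (x : EuclideanSpace ℂ (Fin m)) (hx : ‖x‖ = 1) :
    ‖q M (x : Fin m → ℂ)‖ ≤ numRadius M :=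
  le_csSup (bdd M) ⟨q M (x : Fin m → ℂ), ⟨x, hx, rfl⟩, rfl⟩

lemma radius_nonneg (M : Matrix (Fin m) (Fin m) ℂ) : 0 ≤ numRadius M :=
  Real.sSup_nonneg (by rintro r ⟨z, _, rfl⟩; exact norm_nonneg z)

lemma radius_le (M : Matrix (Fin m) (Fin m) ℂ) (c : ℝ) (hc : 0 ≤ c)
    (h : ∀ x : EuclideanSpace ℂ (Fin m), ‖x‖ = 1 → ‖q M (x : Fin m → ℂ)‖ ≤ c) :
    numRadius M ≤ c := by
  refine Real.sSup_le ?_ hc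
  rintro r ⟨z, ⟨x, hx, rfl⟩, rfl⟩
  exact h x hx

lemma q_smul_vec (M : Matrix (Fin m) (Fin m) ℂ) (c : ℂ) (x : Fin m → ℂ) :
    q M (c • x) = (starRingEnd ℂ) c * c * q M x := by
  simp only [q_eq, Pi.smul_apply, smul_eq_mul, Finset.mul_sum]
  refine Finset.sum_congr rfl fun i _ => Finset.sum_congr rfl fun j _ => ?_
  simp only [_root_.map_mul]
  ring

lemma abs_q_le (M : Matrix (Fin m) (Fin m) ℂ) (v : Fin m → ℂ) :
    ‖q M v‖ ≤ numRadius M * ns v := by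
  by_cases hv : v = 0
  · simp [q_eq, hv, ns]
  · have hns : 0 < ns v := by
      rcases Function.ne_iff.mp hv with ⟨i, hi⟩
      refine Finset.sum_pos' (fun _ _ => sq_nonneg _) ⟨i, Finset.mem_univ i, ?_⟩
      have : (0:ℝ) < ‖v i‖ := by simpa using hi
      positivity
    set t := Real.sqrt (ns v) with ht
    have htpos : 0 < t := Real.sqrt_pos.mpr hns
    have ht2 : t ^ 2 = ns v := Real.sq_sqrt hns.le
    set c : ℂ := ((t⁻¹ : ℝ) : ℂ) with hc
    set y : EuclideanSpace ℂ (Fin m) := WithLp.toLp 2 (c • v : Fin m → ℂ) with hy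
    have hyv : (y : Fin m → ℂ) = c • v := rfl
    have hnsy : ns (c • v) = t⁻¹ ^ 2 * ns v := by
      simp only [ns, Pi.smul_apply, smul_eq_mul, norm_mul, mul_pow, ← Finset.mul_sum]
      congr 1
      rw [hc, Complex.norm_real, Real.norm_eq_abs, abs_of_pos (inv_pos.mpr htpos)]
    have hny : ‖y‖ = 1 := by
      have h1 : ‖y‖ ^ 2 = 1 := by
        rw [norm_sq_eq, hyv, hnsy]
        field_simp [← ht2]
        exact ht2.symm
      nlinarith [norm_nonneg y]
    have hq := le_radius M y hny
    rw [hyv] at hq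
    have hc2 : ‖c‖ = t⁻¹ := by
      rw [hc, Complex.norm_real, Real.norm_eq_abs, abs_of_pos (inv_pos.mpr htpos)]
    have habs : ‖q M (c • v)‖ = t⁻¹ * (t⁻¹ * ‖q M v‖) := by
      rw [q_smul_vec, norm_mul, norm_mul, Complex.norm_conj, hc2, mul_assoc]
    have hkey : ‖q M v‖ = t ^ 2 * ‖q M (c • v)‖ := by
      rw [habs]; field_simp
    rw [hkey]
    calc t ^ 2 * ‖q M (c • v)‖ ≤ t ^ 2 * numRadius M :=
          mul_le_mul_of_nonneg_left hq (sq_nonneg t)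
      _ = numRadius M * ns v := by rw [ht2]; ring

section herm
variable {A : Matrix (Fin m) (Fin m) ℂ}

lemma entry_eq (hA : A.IsHermitian) (i j : Fin m) :
    A i j = ∑ k, (hA.eigenvectorUnitary : Matrix (Fin m) (Fin m) ℂ) i k *
      (hA.eigenvalues k : ℂ) *
      (starRingEnd ℂ) ((hA.eigenvectorUnitary : Matrix (Fin m) (Fin m) ℂ) j k) := by
  conv_lhs => rw [hA.spectral_theorem]
  rw [Unitary.conjStarAlgAut_apply, Matrix.mul_apply]
  refine Finset.sum_congr rfl fun k _ => ?_
  rw [Matrix.mul_diagonal, Matrix.star_apply]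
  rfl

lemma col_sum (hA : A.IsHermitian) (k : Fin m) :
    ∑ i, ‖(hA.eigenvectorUnitary : Matrix (Fin m) (Fin m) ℂ) i k‖ ^ 2 = 1 := by
  have h : star (hA.eigenvectorUnitary : Matrix (Fin m) (Fin m) ℂ) *
      (hA.eigenvectorUnitary : Matrix (Fin m) (Fin m) ℂ) = 1 :=
    Matrix.mem_unitaryGroup_iff'.mp (hA.eigenvectorUnitary).2
  have h2 := congrArg (fun M => M k k) h
  simp only [Matrix.mul_apply, Matrix.star_apply, Matrix.one_apply_eq] at h2
  have hz : ∀ z : ℂ, star z * z = ((‖z‖ ^ 2 : ℝ) : ℂ) := fun z => by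
    rw [show star z = (starRingEnd ℂ) z from rfl, mul_comm, Complex.mul_conj,
      Complex.sq_norm]
  simp only [hz] at h2
  apply Complex.ofReal_injective
  rw [Complex.ofReal_sum, h2, Complex.ofReal_one]

lemma row_sum (hA : A.IsHermitian) (j : Fin m) :
    ∑ k, ‖(hA.eigenvectorUnitary : Matrix (Fin m) (Fin m) ℂ) j k‖ ^ 2 = 1 := by
  have h : (hA.eigenvectorUnitary : Matrix (Fin m) (Fin m) ℂ) *
      star (hA.eigenvectorUnitary : Matrix (Fin m) (Fin m) ℂ) = 1 :=
    Matrix.mem_unitaryGroup_iff.mp (hA.eigenvectorUnitary).2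
  have h2 := congrArg (fun M => M j j) h
  simp only [Matrix.mul_apply, Matrix.star_apply, Matrix.one_apply_eq] at h2
  have hz : ∀ z : ℂ, z * star z = ((‖z‖ ^ 2 : ℝ) : ℂ) := fun z => by
    rw [show star z = (starRingEnd ℂ) z from rfl, Complex.mul_conj,
      Complex.sq_norm]
  simp only [hz] at h2
  apply Complex.ofReal_injective
  rw [Complex.ofReal_sum, h2, Complex.ofReal_one]

lemma eig_abs_le (hA : A.IsHermitian) (k : Fin m) :
    |hA.eigenvalues k| ≤ numRadius A := by
  set U := (hA.eigenvectorUnitary : Matrix (Fin m) (Fin m) ℂ) with hU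
  set v : EuclideanSpace ℂ (Fin m) := WithLp.toLp 2 (fun i => U i k) with hv
  have hvc : (v : Fin m → ℂ) = fun i => U i k := rfl
  have hnv : ‖v‖ = 1 := by
    have h1 : ‖v‖ ^ 2 = 1 := by
      rw [norm_sq_eq, hvc]
      exact col_sum hA k
    nlinarith [norm_nonneg v]
  have hd : q A (v : Fin m → ℂ) = (hA.eigenvalues k : ℂ) := by
    have h1 := congrArg (fun M => M k k) (show star U * A * U = diagonal (RCLike.ofReal ∘ hA.eigenvalues) by have h := hA.conjStarAlgAut_star_eigenvectorUnitary; rw [Unitary.conjStarAlgAut_star_apply] at h; exact h)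
    simp only [Matrix.mul_apply, Matrix.star_apply, Matrix.diagonal_apply_eq,
      Function.comp_apply, Finset.sum_mul] at h1
    rw [q_eq]
    rw [show ((hA.eigenvalues k : ℂ)) = RCLike.ofReal (hA.eigenvalues k) from rfl, ← h1,
      Finset.sum_comm]
    refine Finset.sum_congr rfl fun i _ => Finset.sum_congr rfl fun j _ => ?_
    show (starRingEnd ℂ) (U j k) * (A j i * U i k) = star (U j k) * A j i * U i k
    rw [show star (U j k) = (starRingEnd ℂ) (U j k) from rfl, mul_assoc]
  have := le_radius A v hnv
  rw [hd] at this
  simpa using this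

lemma herm_hadamard (hA : A.IsHermitian) (Y : Matrix (Fin m) (Fin m) ℂ)
    (x : EuclideanSpace ℂ (Fin m)) (hx : ‖x‖ = 1) :
    ‖q (A ⊙ Y) (x : Fin m → ℂ)‖ ≤ numRadius A * numRadius Y := by
  set U := (hA.eigenvectorUnitary : Matrix (Fin m) (Fin m) ℂ) with hU
  set d := hA.eigenvalues with hdd
  set xv := (x : Fin m → ℂ) with hxv
  set w : Fin m → Fin m → ℂ := fun k j => (starRingEnd ℂ) (U j k) * xv j with hw
  have key : q (A ⊙ Y) xv = ∑ k, (d k : ℂ) * q Y (w k) := by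
    have hterm : ∀ i j, (starRingEnd ℂ) (xv i) * ((A ⊙ Y) i j * xv j)
        = ∑ k, (d k : ℂ) * (U i k * (starRingEnd ℂ) (U j k) *
            ((starRingEnd ℂ) (xv i) * (Y i j * xv j))) := by
      intro i j
      rw [Matrix.hadamard_apply, entry_eq hA i j, Finset.sum_mul, Finset.sum_mul,
        Finset.mul_sum]
      refine Finset.sum_congr rfl fun k _ => ?_
      ring
    have swap3 : ∀ f : Fin m → Fin m → Fin m → ℂ,
        (∑ i, ∑ j, ∑ k, f i j k) = ∑ k, ∑ i, ∑ j, f i j k := by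
      intro f
      have h1 : ∀ i, (∑ j, ∑ k, f i j k) = ∑ k, ∑ j, f i j k := fun i => Finset.sum_comm
      simp only [h1]
      exact Finset.sum_comm
    rw [q_eq]
    simp only [hterm]
    rw [swap3]
    refine Finset.sum_congr rfl fun k _ => ?_
    rw [q_eq, Finset.mul_sum]
    refine Finset.sum_congr rfl fun i _ => ?_
    rw [Finset.mul_sum]
    refine Finset.sum_congr rfl fun j _ => ?_
    simp only [hw, _root_.map_mul, Complex.conj_conj]
    ring
  have hsum : ∑ k, ns (w k) = 1 := by
    have : ∀ k, ns (w k) = ∑ j, ‖U j k‖ ^ 2 * ‖xv j‖ ^ 2 := by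
      intro k
      refine Finset.sum_congr rfl fun j _ => ?_
      simp only [hw]
      rw [norm_mul, mul_pow, Complex.norm_conj]
    simp only [this]
    rw [Finset.sum_comm]
    have : ∀ j, ∑ k, ‖U j k‖ ^ 2 * ‖xv j‖ ^ 2 = ‖xv j‖ ^ 2 := by
      intro j
      rw [← Finset.sum_mul, row_sum hA j, one_mul]
    simp only [this]
    exact ns_unit x hx
  rw [key]
  have step : ‖∑ k, (d k : ℂ) * q Y (w k)‖
      ≤ ∑ k, numRadius A * (numRadius Y * ns (w k)) := by
    refine le_trans (norm_sum_le _ _) (Finset.sum_le_sum fun k _ => ?_)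
    rw [norm_mul, Complex.norm_real, Real.norm_eq_abs]
    exact mul_le_mul (eig_abs_le hA k) (abs_q_le Y (w k)) (norm_nonneg _)
      (radius_nonneg A)
  refine le_trans step ?_
  have : ∑ k, numRadius A * (numRadius Y * ns (w k))
      = numRadius A * numRadius Y * ∑ k, ns (w k) := by
    rw [Finset.mul_sum]
    refine Finset.sum_congr rfl fun k _ => by ring
  rw [this, hsum, mul_one]

end herm

end NRaux

namespace NRaux
variable {m : ℕ}

lemma q_addM (M N : Matrix (Fin m) (Fin m) ℂ) (x : Fin m → ℂ) :
    q (M + N) x = q M x + q N x := by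
  rw [q_eq, q_eq, q_eq, ← Finset.sum_add_distrib]
  refine Finset.sum_congr rfl fun i _ => ?_
  rw [← Finset.sum_add_distrib]
  refine Finset.sum_congr rfl fun j _ => ?_
  rw [Matrix.add_apply]; ring

lemma q_smulM (c : ℂ) (M : Matrix (Fin m) (Fin m) ℂ) (x : Fin m → ℂ) :
    q (c • M) x = c * q M x := by
  rw [q_eq, q_eq, Finset.mul_sum]
  refine Finset.sum_congr rfl fun i _ => ?_
  rw [Finset.mul_sum]
  refine Finset.sum_congr rfl fun j _ => ?_
  rw [Matrix.smul_apply, smul_eq_mul]; ring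

lemma q_herm_real {M : Matrix (Fin m) (Fin m) ℂ} (hM : M.IsHermitian) (v : Fin m → ℂ) :
    (((q M v).re : ℝ) : ℂ) = q M v := by
  have hMa : ∀ i j, (starRingEnd ℂ) (M i j) = M j i := fun i j => hM.apply j i
  rw [← Complex.conj_eq_iff_re, q_eq]
  simp only [map_sum, _root_.map_mul, Complex.conj_conj, hMa]
  rw [Finset.sum_comm]
  refine Finset.sum_congr rfl fun i _ => Finset.sum_congr rfl fun j _ => by ring

lemma reM_herm (X : Matrix (Fin m) (Fin m) ℂ) : (reM X).IsHermitian := by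
  show (reM X)ᴴ = reM X
  ext i j
  simp only [reM, Matrix.conjTranspose_apply, Matrix.smul_apply, Matrix.add_apply, smul_eq_mul,
    star_mul', star_add, star_star]
  rw [show star (1/2 : ℂ) = 1/2 from by simp]
  ring

lemma imM_herm (X : Matrix (Fin m) (Fin m) ℂ) : (imM X).IsHermitian := by
  show (imM X)ᴴ = imM X
  ext i j
  simp only [imM, Matrix.conjTranspose_apply, Matrix.smul_apply, Matrix.sub_apply, smul_eq_mul,
    star_mul', star_sub, star_star]
  rw [show star (-Complex.I/2 : ℂ) = Complex.I/2 from by simp]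
  ring

lemma decomp (X : Matrix (Fin m) (Fin m) ℂ) : reM X + Complex.I • imM X = X := by
  ext i j
  simp only [reM, imM, Matrix.add_apply, Matrix.smul_apply, Matrix.sub_apply, smul_eq_mul,
    Matrix.conjTranspose_apply]
  linear_combination ((star (X j i) - X i j)/2) * Complex.I_sq

lemma sector_radius_le (X : Matrix (Fin m) (Fin m) ℂ) (α : ℝ)
    (hα : α ∈ Set.Ico 0 (Real.pi / 2)) (hX : numRange X ⊆ sector α) :
    numRadius (imM X) ≤ Real.tan α * numRadius (reM X) := by
  have htan : 0 ≤ Real.tan α :=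
    Real.tan_nonneg_of_nonneg_of_le_pi_div_two hα.1 hα.2.le
  refine radius_le _ _ (mul_nonneg htan (radius_nonneg _)) fun x hx => ?_
  have hmem : q X (x : Fin m → ℂ) ∈ numRange X := ⟨x, hx, rfl⟩
  obtain ⟨hre, him⟩ := hX hmem
  set a : ℂ := q (reM X) (x : Fin m → ℂ) with ha
  set b : ℂ := q (imM X) (x : Fin m → ℂ) with hb
  have hra : ((a.re : ℝ) : ℂ) = a := q_herm_real (reM_herm X) _
  have hrb : ((b.re : ℝ) : ℂ) = b := q_herm_real (imM_herm X) _
  have hq : q X (x : Fin m → ℂ) = a + Complex.I * b := by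
    conv_lhs => rw [← decomp X]
    rw [q_addM, q_smulM]
  have hre' : (q X (x : Fin m → ℂ)).re = a.re := by
    rw [hq, ← hra, ← hrb]; simp
  have him' : (q X (x : Fin m → ℂ)).im = b.re := by
    rw [hq, ← hra, ← hrb]; simp
  have h1 : ‖b‖ ≤ Real.tan α * a.re := by
    rw [← hrb, Complex.norm_real, Real.norm_eq_abs]
    calc |b.re| = |(q X (x : Fin m → ℂ)).im| := by rw [him']
      _ ≤ Real.tan α * (q X (x : Fin m → ℂ)).re := him
      _ = Real.tan α * a.re := by rw [hre']
  have h2 : a.re ≤ numRadius (reM X) := by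
    calc a.re ≤ |a.re| := le_abs_self _
      _ = ‖((a.re : ℝ) : ℂ)‖ := by rw [Complex.norm_real, Real.norm_eq_abs]
      _ = ‖a‖ := by rw [hra]
      _ ≤ numRadius (reM X) := le_radius _ x hx
  calc ‖b‖ ≤ Real.tan α * a.re := h1
    _ ≤ Real.tan α * numRadius (reM X) := mul_le_mul_of_nonneg_left h2 htan

end NRaux

open NRaux

theorem numRadius_hadamard_le_min_tan {n : ℕ} (X Y : Matrix (Fin n) (Fin n) ℂ)
    (α₁ α₂ : ℝ) (hα₁ : α₁ ∈ Set.Ico 0 (Real.pi / 2)) (hα₂ : α₂ ∈ Set.Ico 0 (Real.pi / 2))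
    (hX : numRange X ⊆ sector α₁) (hY : numRange Y ⊆ sector α₂) :
    numRadius (X ⊙ Y) ≤
      min ((1 + Real.tan α₁) * numRadius (reM X) * numRadius Y)
          ((1 + Real.tan α₂) * numRadius X * numRadius (reM Y)) := by
  have htan1 : 0 ≤ Real.tan α₁ :=
    Real.tan_nonneg_of_nonneg_of_le_pi_div_two hα₁.1 hα₁.2.le
  have htan2 : 0 ≤ Real.tan α₂ :=
    Real.tan_nonneg_of_nonneg_of_le_pi_div_two hα₂.1 hα₂.2.le
  have hBA := sector_radius_le X α₁ hα₁ hX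
  have hDC := sector_radius_le Y α₂ hα₂ hY
  refine le_min ?_ ?_
  · refine radius_le _ _
      (mul_nonneg (mul_nonneg (by linarith) (radius_nonneg _)) (radius_nonneg _))
      fun x hx => ?_
    have hXY : X ⊙ Y = reM X ⊙ Y + Complex.I • (imM X ⊙ Y) := by
      conv_lhs => rw [← decomp X]
      rw [Matrix.add_hadamard, Matrix.smul_hadamard]
    calc ‖q (X ⊙ Y) (x : Fin n → ℂ)‖
        = ‖q (reM X ⊙ Y) (x : Fin n → ℂ)
            + Complex.I * q (imM X ⊙ Y) (x : Fin n → ℂ)‖ := by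
          rw [hXY, q_addM, q_smulM]
      _ ≤ ‖q (reM X ⊙ Y) (x : Fin n → ℂ)‖
            + ‖Complex.I * q (imM X ⊙ Y) (x : Fin n → ℂ)‖ :=
          norm_add_le _ _
      _ = ‖q (reM X ⊙ Y) (x : Fin n → ℂ)‖
            + ‖q (imM X ⊙ Y) (x : Fin n → ℂ)‖ := by
          rw [norm_mul, Complex.norm_I, one_mul]
      _ ≤ numRadius (reM X) * numRadius Y + numRadius (imM X) * numRadius Y :=
          add_le_add (herm_hadamard (reM_herm X) Y x hx) (herm_hadamard (imM_herm X) Y x hx)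
      _ ≤ numRadius (reM X) * numRadius Y
            + (Real.tan α₁ * numRadius (reM X)) * numRadius Y :=
          add_le_add le_rfl (mul_le_mul_of_nonneg_right hBA (radius_nonneg Y))
      _ = (1 + Real.tan α₁) * numRadius (reM X) * numRadius Y := by ring
  · refine radius_le _ _
      (mul_nonneg (mul_nonneg (by linarith) (radius_nonneg _)) (radius_nonneg _))
      fun x hx => ?_
    have hXY : X ⊙ Y = reM Y ⊙ X + Complex.I • (imM Y ⊙ X) := by
      rw [Matrix.hadamard_comm]
      conv_lhs => rw [← decomp Y]
      rw [Matrix.add_hadamard, Matrix.smul_hadamard]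
    calc ‖q (X ⊙ Y) (x : Fin n → ℂ)‖
        = ‖q (reM Y ⊙ X) (x : Fin n → ℂ)
            + Complex.I * q (imM Y ⊙ X) (x : Fin n → ℂ)‖ := by
          rw [hXY, q_addM, q_smulM]
      _ ≤ ‖q (reM Y ⊙ X) (x : Fin n → ℂ)‖
            + ‖Complex.I * q (imM Y ⊙ X) (x : Fin n → ℂ)‖ :=
          norm_add_le _ _
      _ = ‖q (reM Y ⊙ X) (x : Fin n → ℂ)‖
            + ‖q (imM Y ⊙ X) (x : Fin n → ℂ)‖ := by
          rw [norm_mul, Complex.norm_I, one_mul]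
      _ ≤ numRadius (reM Y) * numRadius X + numRadius (imM Y) * numRadius X :=
          add_le_add (herm_hadamard (reM_herm Y) X x hx) (herm_hadamard (imM_herm Y) X x hx)
      _ ≤ numRadius (reM Y) * numRadius X
            + (Real.tan α₂ * numRadius (reM Y)) * numRadius X :=
          add_le_add le_rfl (mul_le_mul_of_nonneg_right hDC (radius_nonneg X))
      _ = (1 + Real.tan α₂) * numRadius X * numRadius (reM Y) := by ring
end
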